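/- arXiv:2210.00039 — 6 statements merged into one kernel-verified Lean document; each statement's English description precedes it below -/
import Mathlib

section
/- If G is a connected chordal graph, then the diameter of the subgraph induced by the center C(G) is at most 3. -/
open SimpleGraph

variable {V : Type*}

noncomputable instance (priority := low) instFintypeSubsetOfFinite [Finite V] (s : Set V) :
    Fintype ↥s := Fintype.ofFinite _

/-- Eccentricity of a vertex: max distance to any vertex. -/
noncomputable def ecc [Fintype V] (G : SimpleGraph V) (x : V) : ℕ :=
  Finset.univ.sup (G.dist x)

/-- Radius: minimum eccentricity. -/
noncomputable def grad [Fintype V] (G : SimpleGraph V) : ℕ :=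
  sInf (Set.range (ecc G))

/-- Diameter: maximum eccentricity. -/
noncomputable def gdiam [Fintype V] (G : SimpleGraph V) : ℕ :=
  Finset.univ.sup (ecc G)

/-- The center: vertices of minimum eccentricity. -/
def center [Fintype V] (G : SimpleGraph V) : Set V :=
  {x | ecc G x = grad G}

/-- `G` has an induced cycle of length `n`. -/
def HasInducedCycle (G : SimpleGraph V) (n : ℕ) : Prop :=
  3 ≤ n ∧ ∃ f : ZMod n → V, Function.Injective f ∧
    ∀ i j : ZMod n, G.Adj (f i) (f j) ↔ (i = j + 1 ∨ j = i + 1)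

/-- `G` is `k`-chordal: no induced cycle of length greater than `k`. -/
def KChordal (G : SimpleGraph V) (k : ℕ) : Prop :=
  ∀ n, k < n → ¬ HasInducedCycle G n

namespace CCC

variable {G : SimpleGraph V}

structure IsCycleList (G : SimpleGraph V) (L : List V) : Prop where
  three_le : 3 ≤ L.length
  nodup : L.Nodup
  chain : ∀ i : ℕ, (hi : i + 1 < L.length) → G.Adj (L[i]'(by omega)) (L[i+1]'hi)
  loop : G.Adj (L[L.length - 1]'(by omega)) (L[0]'(by omega))

lemma exists_chord (hch : KChordal G 3) {L : List V} (hc : IsCycleList G L) (h4 : 4 ≤ L.length) :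
    ∃ (i j : ℕ) (hij : i + 2 ≤ j) (hj : j < L.length),
      (i ≠ 0 ∨ j ≠ L.length - 1) ∧ G.Adj (L[i]'(by omega)) (L[j]'hj) := by
  by_contra hno
  push_neg at hno
  apply hch L.length (by omega)
  haveI : NeZero L.length := ⟨by omega⟩
  haveI : Fact (1 < L.length) := ⟨by omega⟩
  refine ⟨by omega, fun i => L[(ZMod.val i)]'(ZMod.val_lt i), ?_, ?_⟩
  · intro a b hab
    apply ZMod.val_injective
    exact (hc.nodup.getElem_inj_iff).mp hab
  · have hsucc : ∀ a b : ZMod L.length, a = b + 1 ↔ a.val = (b.val + 1) % L.length := by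
      intro a b
      constructor
      · intro h; subst h; rw [ZMod.val_add, ZMod.val_one]
      · intro h
        apply ZMod.val_injective
        rw [h, ZMod.val_add, ZMod.val_one]
    intro i j
    have ha : i.val < L.length := ZMod.val_lt i
    have hb : j.val < L.length := ZMod.val_lt j
    constructor
    · intro hadj
      replace hadj : G.Adj (L[i.val]'(ZMod.val_lt i)) (L[j.val]'(ZMod.val_lt j)) := hadj
      by_contra hcon
      push_neg at hcon
      have h1 : ¬ i.val = (j.val + 1) % L.length := fun h => hcon.1 ((hsucc i j).mpr h)
      have h2 : ¬ j.val = (i.val + 1) % L.length := fun h => hcon.2 ((hsucc j i).mpr h)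
      rcases lt_trichotomy i.val j.val with hab | hab | hab
      · have hb2 : i.val + 2 ≤ j.val := by
          rcases (by omega : i.val + 1 = j.val ∨ i.val + 2 ≤ j.val) with h | h
          · exact absurd (by rw [h, Nat.mod_eq_of_lt hb]) h2
          · exact h
        have hcond : i.val ≠ 0 ∨ j.val ≠ L.length - 1 := by
          by_contra hc0
          push_neg at hc0
          apply h1
          have : j.val + 1 = L.length := by omega
          rw [this, Nat.mod_self, hc0.1]
        exact hno i.val j.val hb2 hb hcond hadj
      · exfalso
        have : (L[(ZMod.val i)]'(ZMod.val_lt i)) = (L[(ZMod.val j)]'(ZMod.val_lt j)) := by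
          congr 1
        rw [this] at hadj
        exact G.loopless.irrefl _ hadj
      · have hb2 : j.val + 2 ≤ i.val := by
          rcases (by omega : j.val + 1 = i.val ∨ j.val + 2 ≤ i.val) with h | h
          · exact absurd (by rw [h, Nat.mod_eq_of_lt ha]) h1
          · exact h
        have hcond : j.val ≠ 0 ∨ i.val ≠ L.length - 1 := by
          by_contra hc0
          push_neg at hc0
          apply h2
          have : i.val + 1 = L.length := by omega
          rw [this, Nat.mod_self, hc0.1]
        exact hno j.val i.val hb2 ha hcond hadj.symm
    · intro h
      show G.Adj (L[i.val]'(ZMod.val_lt i)) (L[j.val]'(ZMod.val_lt j))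
      rcases h with h | h
      · have ha' : i.val = (j.val + 1) % L.length := (hsucc i j).mp h
        by_cases hb1 : j.val + 1 < L.length
        · have hival : i.val = j.val + 1 := by rw [ha', Nat.mod_eq_of_lt hb1]
          have := hc.chain j.val (by omega)
          have hfin : (L[(ZMod.val i)]'(ZMod.val_lt i)) = L[j.val + 1]'hb1 := by
            congr 1
          rw [hfin]
          exact this.symm
        · have hj' : j.val = L.length - 1 := by omega
          have hi0 : i.val = 0 := by
            rw [ha', (by omega : j.val + 1 = L.length), Nat.mod_self]
          have := hc.loop
          have e1 : (L[(ZMod.val i)]'(ZMod.val_lt i)) = L[0]'(by omega) := by congr 1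
          have e2 : (L[(ZMod.val j)]'(ZMod.val_lt j)) = L[L.length - 1]'(by omega) := by congr 1
          rw [e1, e2]
          exact this.symm
      · have hb' : j.val = (i.val + 1) % L.length := (hsucc j i).mp h
        by_cases ha1 : i.val + 1 < L.length
        · have hjval : j.val = i.val + 1 := by rw [hb', Nat.mod_eq_of_lt ha1]
          have := hc.chain i.val (by omega)
          have hfin : (L[(ZMod.val j)]'(ZMod.val_lt j)) = L[i.val + 1]'ha1 := by
            congr 1
          rw [hfin]
          exact this
        · have hi' : i.val = L.length - 1 := by omega
          have hj0 : j.val = 0 := by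
            rw [hb', (by omega : i.val + 1 = L.length), Nat.mod_self]
          have := hc.loop
          have e1 : (L[(ZMod.val j)]'(ZMod.val_lt j)) = L[0]'(by omega) := by congr 1
          have e2 : (L[(ZMod.val i)]'(ZMod.val_lt i)) = L[L.length - 1]'(by omega) := by congr 1
          rw [e1, e2]
          exact this


lemma tri_aux (hch : KChordal G 3) :
    ∀ n (L : List V), L.length ≤ n → IsCycleList G L → ∀ a b : V,
      L[0]? = some a → L[L.length - 1]? = some b →
      ∃ t ∈ L, t ≠ a ∧ t ≠ b ∧ G.Adj t a ∧ G.Adj t b := by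
  intro n
  induction n with
  | zero => intro L hL hc; exact absurd hc.three_le (by omega)
  | succ n IH =>
    intro L hL hc a b ha hb
    have h0 : 0 < L.length := by have := hc.three_le; omega
    have hl : L.length - 1 < L.length := by omega
    rw [List.getElem?_eq_getElem h0] at ha
    rw [List.getElem?_eq_getElem hl] at hb
    replace ha : L[0]'h0 = a := Option.some_inj.mp ha
    replace hb : L[L.length - 1]'hl = b := Option.some_inj.mp hb
    by_cases h4 : 4 ≤ L.length
    · obtain ⟨i, j, hij, hj, hcond, hadj⟩ := exists_chord hch hc h4
      have hi : i < L.length := by omega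
      set M : List V := L.take (i + 1) ++ L.drop j with hM
      have hlen_take : (L.take (i + 1)).length = i + 1 := by
        rw [List.length_take]; omega
      have hMlen : M.length = (i + 1) + (L.length - j) := by
        rw [hM, List.length_append, List.length_drop, hlen_take]
      have hMget1 : ∀ (k : ℕ) (hk : k ≤ i), M[k]'(by omega) = L[k]'(by omega) := by
        intro k hk
        have e1 : (L.take (i+1) ++ L.drop j)[k]'(by rw [List.length_append, hlen_take]; omega)
            = (L.take (i+1))[k]'(by rw [hlen_take]; omega) := List.getElem_append_left _
        have e2 : (L.take (i+1))[k]'(by rw [hlen_take]; omega) = L[k]'(by omega) :=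
          List.getElem_take ..
        exact e1.trans e2
      have hMget2 : ∀ (k : ℕ) (hk : k < L.length - j),
          M[i + 1 + k]'(by omega) = L[j + k]'(by omega) := by
        intro k hk
        have e1 : (L.take (i+1) ++ L.drop j)[i+1+k]'(by rw [List.length_append, hlen_take, List.length_drop]; omega)
            = (L.drop j)[i+1+k - (L.take (i+1)).length]'(by rw [hlen_take, List.length_drop]; omega)
            := List.getElem_append_right (by rw [hlen_take]; omega)
        have e2 : (L.drop j)[i+1+k - (L.take (i+1)).length]'(by rw [hlen_take, List.length_drop]; omega) = L[j + k]'(by omega) := by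
          simp only [hlen_take]
          simp only [show i + 1 + k - (i + 1) = k from by omega]
          exact List.getElem_drop ..
        exact e1.trans e2
      have hMcard : 3 ≤ M.length := by
        rw [hMlen]; rcases hcond with h | h <;> omega
      have hMlt : M.length < L.length := by rw [hMlen]; omega
      have hsub : List.Sublist M L := by
        have h1 : List.Sublist (L.drop j) (L.drop (i + 1)) := by
          rw [show j = (i + 1) + (j - (i + 1)) from by omega, ← List.drop_drop]
          exact List.drop_sublist _ _
        have h2 := h1.append_left (L.take (i + 1))
        rwa [List.take_append_drop] at h2
      have hMnodup : M.Nodup := hsub.nodup hc.nodup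
      have e0 : M[0]'(by omega) = L[0]'h0 := hMget1 0 (by omega)
      have el : M[M.length - 1]'(by omega) = L[L.length - 1]'hl := by
        have h1 : M.length - 1 = i + 1 + (L.length - j - 1) := by rw [hMlen]; omega
        simp only [h1]
        rw [hMget2 (L.length - j - 1) (by omega)]
        simp only [show j + (L.length - j - 1) = L.length - 1 from by omega]
      have hMcyc : IsCycleList G M := by
        refine ⟨hMcard, hMnodup, ?_, ?_⟩
        · intro k hk
          have hkM : k + 1 < (i + 1) + (L.length - j) := by rw [← hMlen]; omega
          rcases lt_trichotomy k i with h | h | h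
          · rw [hMget1 k (by omega), hMget1 (k+1) (by omega)]
            exact hc.chain k (by omega)
          · subst h
            rw [hMget1 k le_rfl]
            have e2 : M[k+1]'(by omega) = L[j]'hj := by
              have := hMget2 0 (by omega)
              simpa using this
            rw [e2]
            exact hadj
          · have e1 : M[k]'(by omega) = L[j + (k - i - 1)]'(by omega) := by
              have h5 := hMget2 (k - i - 1) (by omega)
              simp only [show i + 1 + (k - i - 1) = k from by omega] at h5
              exact h5
            have e2 : M[k+1]'(by omega) = L[(j + (k - i - 1)) + 1]'(by omega) := by
              have h6 := hMget2 (k - i) (by omega)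
              simp only [show i + 1 + (k - i) = k + 1 from by omega] at h6
              rw [h6]
              simp only [show j + (k - i) = (j + (k - i - 1)) + 1 from by omega]
            rw [e1, e2]
            exact hc.chain (j + (k - i - 1)) (by omega)
        · rw [el, e0]
          exact hc.loop
      have hMa : M[0]? = some a := by
        rw [List.getElem?_eq_getElem (by omega : 0 < M.length), e0, ha]
      have hMb : M[M.length - 1]? = some b := by
        rw [List.getElem?_eq_getElem (by omega : M.length - 1 < M.length), el, hb]
      obtain ⟨t, htM, ht1, ht2, ht3, ht4⟩ := IH M (by omega) hMcyc a b hMa hMb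
      exact ⟨t, hsub.subset htM, ht1, ht2, ht3, ht4⟩
    · have h3 : L.length = 3 := by have := hc.three_le; omega
      refine ⟨L[1]'(by omega), List.getElem_mem _, ?_, ?_, ?_, ?_⟩
      · intro hcontra
        rw [← ha] at hcontra
        exact absurd ((hc.nodup.getElem_inj_iff).mp hcontra) (by omega)
      · intro hcontra
        rw [← hb] at hcontra
        exact absurd ((hc.nodup.getElem_inj_iff).mp hcontra) (by omega)
      · rw [← ha]
        exact (hc.chain 0 (by omega)).symm
      · rw [← hb]
        simp only [show L.length - 1 = 1 + 1 from by omega]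
        exact hc.chain 1 (by omega)

private lemma two_le_length_of_edge_not_mem {u v : V} (h : G.Adj u v) (P : G.Walk v u)
    (he : s(u,v) ∉ P.edges) : 2 ≤ P.length := by
  cases P with
  | nil => exact absurd h (by simp)
  | cons h1 P1 =>
    cases P1 with
    | nil => exact absurd (by simp [Sym2.eq_swap]) he
    | cons h2 P2 => simp only [Walk.length_cons]; omega

lemma tri_walk (hch : KChordal G 3) {u v : V} (h : G.Adj u v) (W : G.Walk v u)
    (he : s(u,v) ∉ W.edges) :
    ∃ t ∈ W.support, t ≠ u ∧ t ≠ v ∧ G.Adj t u ∧ G.Adj t v := by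
  haveI := Classical.decEq V
  have hpath := W.bypass_isPath
  have hePb : s(u,v) ∉ W.bypass.edges := fun hh => he (W.edges_bypass_subset hh)
  have hlen2 : 2 ≤ W.bypass.length := two_le_length_of_edge_not_mem h W.bypass hePb
  have hlenL : W.bypass.support.length = W.bypass.length + 1 := Walk.length_support _
  have h0 : 0 < W.bypass.support.length := by omega
  have hl : W.bypass.support.length - 1 < W.bypass.support.length := by omega
  have hL0 : W.bypass.support[0]'h0 = v := by
    have hh := Walk.head_support W.bypass
    rwa [List.head_eq_getElem] at hh
  have hLlast : W.bypass.support[W.bypass.support.length - 1]'hl = u := by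
    have hgl := Walk.getLast_support W.bypass
    rwa [List.getLast_eq_getElem] at hgl
  have hcyc : IsCycleList G W.bypass.support := by
    refine ⟨by omega, hpath.support_nodup, ?_, ?_⟩
    · intro i hi
      have hch' := Walk.isChain_adj_support W.bypass
      rw [List.isChain_iff_getElem] at hch'
      have := hch' i (by omega)
      simpa [List.get_eq_getElem] using this
    · rw [hLlast, hL0]
      exact h
  obtain ⟨t, htL, htv, htu, hav, hau⟩ := tri_aux hch W.bypass.support.length W.bypass.support
    le_rfl hcyc v u
    (by rw [List.getElem?_eq_getElem h0, hL0])
    (by rw [List.getElem?_eq_getElem hl, hLlast])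
  exact ⟨t, W.support_bypass_subset htL, htu, htv, hau, hav⟩

lemma adj_dist_one {u v : V} (h : G.Adj u v) : G.dist u v = 1 := dist_eq_one_iff_adj.mpr h

lemma dist_split (hG : G.Connected) {u v t : V} (W : G.Walk u v) (hW : W.length = G.dist u v)
    (ht : t ∈ W.support) : G.dist u t + G.dist t v = G.dist u v := by
  obtain ⟨q, r, rfl⟩ := Walk.mem_support_iff_exists_append.mp ht
  have h1 : G.dist u t ≤ q.length := dist_le q
  have h2 : G.dist t v ≤ r.length := dist_le r
  have h3 : G.dist u v ≤ G.dist u t + G.dist t v := hG.dist_triangle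
  have h4 : q.length + r.length = G.dist u v := by rw [← hW, Walk.length_append]
  omega

lemma mem_support_append {u v w t : V} {p : G.Walk u v} {q : G.Walk v w}
    (ht : t ∈ (p.append q).support) : t ∈ p.support ∨ t ∈ q.support := by
  rw [Walk.support_append, List.mem_append] at ht
  exact ht.imp id List.mem_of_mem_tail

lemma mem_support_reverse {u v t : V} {p : G.Walk u v} (ht : t ∈ p.reverse.support) :
    t ∈ p.support := by rwa [Walk.support_reverse, List.mem_reverse] at ht

/-- The key configuration lemma: in a connected chordal graph there is no vertex `m`
adjacent to `x`, "between" `x` and `y`, which is strictly farther from some `z`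
than both `x` and `y` are. -/
lemma QG (hG : G.Connected) (hch : KChordal G 3) {x m y z : V} (hxm : G.Adj x m)
    (hxy : G.dist x y = G.dist m y + 1) (hmy : 1 ≤ G.dist m y)
    (hxz : G.dist x z < G.dist m z) (hyz : G.dist y z < G.dist m z) : False := by
  obtain ⟨Wxz, hWxz⟩ := hG.exists_walk_length_eq_dist x z
  obtain ⟨Wyz, hWyz⟩ := hG.exists_walk_length_eq_dist y z
  obtain ⟨Wym, hWym⟩ := hG.exists_walk_length_eq_dist y m
  have cyx : G.dist y x = G.dist x y := dist_comm
  have cym : G.dist y m = G.dist m y := dist_comm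
  set B : G.Walk x m := Wxz.append (Wyz.reverse.append Wym) with hB
  have hedge : s(m, x) ∉ B.edges := by
    intro hmem
    rw [hB, Walk.edges_append, List.mem_append, Walk.edges_append, List.mem_append] at hmem
    rcases hmem with h | h | h
    · have hm : m ∈ Wxz.support := Walk.fst_mem_support_of_mem_edges _ h
      have := dist_split hG Wxz hWxz hm
      omega
    · rw [Walk.edges_reverse, List.mem_reverse] at h
      have hm : m ∈ Wyz.support := Walk.fst_mem_support_of_mem_edges _ h
      have := dist_split hG Wyz hWyz hm
      omega
    · have hx' : x ∈ Wym.support := Walk.snd_mem_support_of_mem_edges _ h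
      have := dist_split hG Wym hWym hx'
      have hxm1 : G.dist x m = 1 := adj_dist_one hxm
      omega
  obtain ⟨t, htB, htm, htx, ham, hax⟩ := tri_walk hch hxm.symm B hedge
  have hBsup : t ∈ Wxz.support ∨ t ∈ Wyz.support ∨ t ∈ Wym.support := by
    rw [hB] at htB
    rcases mem_support_append htB with h | h
    · exact Or.inl h
    · rcases mem_support_append h with h' | h'
      · exact Or.inr (Or.inl (mem_support_reverse h'))
      · exact Or.inr (Or.inr h')
  have hmt1 : G.dist m t = 1 := adj_dist_one ham.symm
  have hxt1 : G.dist x t = 1 := adj_dist_one hax.symm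
  have htri : G.dist m z ≤ G.dist m t + G.dist t z := hG.dist_triangle
  rcases hBsup with ht | ht | ht
  · have hsplit := dist_split hG Wxz hWxz ht
    omega
  · have hsplit := dist_split hG Wyz hWyz ht
    have hty : G.dist y t = 0 := by omega
    have hyt : y = t := (hG.dist_eq_zero_iff).mp hty
    have : G.dist x y = 1 := by rw [hyt]; exact hxt1
    omega
  · have hsplit := dist_split hG Wym hWym ht
    have htm1 : G.dist t m = 1 := adj_dist_one ham
    have h4 : G.dist x y ≤ G.dist x t + G.dist t y := hG.dist_triangle
    have cty : G.dist t y = G.dist y t := dist_comm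
    omega

/-- Middle vertex of a walk of length two. -/
lemma mid_of_two (hG : G.Connected) {x m : V} (hxm : G.dist x m = 2) :
    ∃ p, G.Adj x p ∧ G.Adj p m := by
  obtain ⟨W, hW⟩ := hG.exists_walk_length_eq_dist x m
  have hlen2 : W.length = 2 := by rw [hW, hxm]
  refine ⟨W.getVert 1, ?_, ?_⟩
  · have := W.adj_getVert_succ (show 0 < W.length by omega)
    rwa [Walk.getVert_zero] at this
  · have := W.adj_getVert_succ (show 1 < W.length by omega)
    rwa [show (1:ℕ)+1 = W.length from by omega, Walk.getVert_length] at this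

lemma sideV (hG : G.Connected) (hch : KChordal G 3) {x m y z : V}
    (hxm : G.dist x m = 2) (hmy : G.dist m y = 2) (hxy : G.dist x y = 4)
    (hk : G.dist x z ≤ G.dist m z) (hl : G.dist y z ≤ G.dist m z) :
    (∃ s, G.Adj s m ∧ G.dist x s = 1 ∧ G.dist s z + 1 = G.dist m z) ∨
    (∃ t, G.Adj t m ∧ G.dist y t = 1 ∧ G.dist t z + 1 = G.dist m z) := by
  obtain ⟨p, hadjxp, hadjpm⟩ := mid_of_two hG hxm
  have hdxp : G.dist x p = 1 := adj_dist_one hadjxp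
  have hdpm : G.dist p m = 1 := adj_dist_one hadjpm
  have hdmp : G.dist m p = 1 := by rw [SimpleGraph.dist_comm]; exact hdpm
  have hdpy : G.dist p y = 3 := by
    have h1 : G.dist x y ≤ G.dist x p + G.dist p y := hG.dist_triangle
    have h2 : G.dist p y ≤ G.dist p m + G.dist m y := hG.dist_triangle
    omega
  -- nondegeneracy
  have hxz1 : 1 ≤ G.dist x z := by
    rcases Nat.eq_zero_or_pos (G.dist x z) with h0 | h0
    · exfalso
      have hxz := (hG.dist_eq_zero_iff).mp h0
      subst hxz
      have c1 : G.dist y x = G.dist x y := dist_comm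
      have c2 : G.dist m x = G.dist x m := dist_comm
      omega
    · exact h0
  have hyz1 : 1 ≤ G.dist y z := by
    rcases Nat.eq_zero_or_pos (G.dist y z) with h0 | h0
    · exfalso
      have hyz := (hG.dist_eq_zero_iff).mp h0
      subst hyz
      have c2 : G.dist m y = G.dist y m := dist_comm
      omega
    · exact h0
  obtain ⟨Wmy, hWmy⟩ := hG.exists_walk_length_eq_dist m y
  obtain ⟨Wyz, hWyz⟩ := hG.exists_walk_length_eq_dist y z
  obtain ⟨Wxz, hWxz⟩ := hG.exists_walk_length_eq_dist x z
  set Exp : G.Walk x p := Walk.cons hadjxp Walk.nil with hExp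
  set B : G.Walk m p := Wmy.append (Wyz.append (Wxz.reverse.append Exp)) with hB
  have hedge : s(p, m) ∉ B.edges := by
    intro hmem
    rw [hB, Walk.edges_append, List.mem_append, Walk.edges_append, List.mem_append,
      Walk.edges_append, List.mem_append] at hmem
    rcases hmem with h | h | h | h
    · have hp' : p ∈ Wmy.support := Walk.fst_mem_support_of_mem_edges _ h
      have := dist_split hG Wmy hWmy hp'
      omega
    · have hm : m ∈ Wyz.support := Walk.snd_mem_support_of_mem_edges _ h
      have := dist_split hG Wyz hWyz hm
      have c2 : G.dist y m = G.dist m y := dist_comm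
      omega
    · rw [Walk.edges_reverse, List.mem_reverse] at h
      have hm : m ∈ Wxz.support := Walk.snd_mem_support_of_mem_edges _ h
      have := dist_split hG Wxz hWxz hm
      omega
    · rw [hExp] at h
      simp only [Walk.edges_cons, Walk.edges_nil, List.mem_singleton] at h
      rw [Sym2.eq_iff] at h
      rcases h with ⟨h1, h2⟩ | ⟨h1, h2⟩
      · exact hadjpm.ne h2.symm
      · rw [h2] at hxm
        simp [dist_self] at hxm
  obtain ⟨t, htB, htp, htm, hap, ham⟩ := tri_walk hch hadjpm B hedge
  have hBsup : t ∈ Wmy.support ∨ t ∈ Wyz.support ∨ t ∈ Wxz.support ∨ t ∈ Exp.support := by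
    rw [hB] at htB
    rcases mem_support_append htB with h | h
    · exact Or.inl h
    rcases mem_support_append h with h | h
    · exact Or.inr (Or.inl h)
    rcases mem_support_append h with h | h
    · exact Or.inr (Or.inr (Or.inl (mem_support_reverse h)))
    · exact Or.inr (Or.inr (Or.inr h))
  have hmt1 : G.dist m t = 1 := adj_dist_one ham.symm
  have hpt1 : G.dist p t = 1 := adj_dist_one hap.symm
  have htri : G.dist m z ≤ G.dist m t + G.dist t z := hG.dist_triangle
  rcases hBsup with ht | ht | ht | ht
  · exfalso
    have hsplit := dist_split hG Wmy hWmy ht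
    have h2 : G.dist p y ≤ G.dist p t + G.dist t y := hG.dist_triangle
    omega
  · have hsplit := dist_split hG Wyz hWyz ht
    have hyt1 : G.dist y t ≤ 1 := by omega
    rcases Nat.eq_zero_or_pos (G.dist y t) with h0 | h0
    · exfalso
      have := (hG.dist_eq_zero_iff).mp h0
      subst this
      omega
    · right
      exact ⟨t, ham, by omega, by omega⟩
  · have hsplit := dist_split hG Wxz hWxz ht
    have hxt1 : G.dist x t ≤ 1 := by omega
    rcases Nat.eq_zero_or_pos (G.dist x t) with h0 | h0
    · exfalso
      have := (hG.dist_eq_zero_iff).mp h0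
      subst this
      have := adj_dist_one ham
      omega
    · left
      exact ⟨t, ham, by omega, by omega⟩
  · exfalso
    rw [hExp] at ht
    simp only [Walk.support_cons, Walk.support_nil, List.mem_cons, List.mem_singleton] at ht
    rcases ht with h | h | h
    · subst h
      have := adj_dist_one ham
      omega
    · exact htp h
    · simp at h

lemma sideV2 (hG : G.Connected) (hch : KChordal G 3) {x m y z s : V}
    (hxm : G.dist x m = 2) (hmy : G.dist m y = 2) (hxy : G.dist x y = 4)
    (hl : G.dist y z ≤ G.dist m z)
    (hsm : G.Adj s m) (hxs : G.dist x s = 1) (hsz : G.dist s z + 1 = G.dist m z) :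
    ∃ t, G.Adj t m ∧ G.dist y t = 1 ∧ G.dist t z + 1 = G.dist m z := by
  have hsy : G.dist s y = 3 := by
    have h1 : G.dist x y ≤ G.dist x s + G.dist s y := hG.dist_triangle
    have h2 : G.dist s y ≤ G.dist s m + G.dist m y := hG.dist_triangle
    have h3 : G.dist s m = 1 := adj_dist_one hsm
    omega
  obtain ⟨q, hadjmq, hadjqy⟩ := mid_of_two hG hmy
  have hdqy : G.dist q y = 1 := adj_dist_one hadjqy
  have hdmq : G.dist m q = 1 := adj_dist_one hadjmq
  have hqs : q ≠ s := by
    intro h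
    rw [h] at hdqy
    have : G.dist y s = G.dist s y := dist_comm
    omega
  obtain ⟨Wsz, hWsz⟩ := hG.exists_walk_length_eq_dist s z
  obtain ⟨Wyz, hWyz⟩ := hG.exists_walk_length_eq_dist y z
  set E1 : G.Walk m s := Walk.cons hsm.symm Walk.nil with hE1
  set E2 : G.Walk y q := Walk.cons hadjqy.symm Walk.nil with hE2
  set B : G.Walk m q := E1.append (Wsz.append (Wyz.reverse.append E2)) with hB
  have hedge : s(q, m) ∉ B.edges := by
    intro hmem
    rw [hB, Walk.edges_append, List.mem_append, Walk.edges_append, List.mem_append,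
      Walk.edges_append, List.mem_append] at hmem
    rcases hmem with h | h | h | h
    · rw [hE1] at h
      simp only [Walk.edges_cons, Walk.edges_nil, List.mem_singleton] at h
      rw [Sym2.eq_iff] at h
      rcases h with ⟨h1, h2⟩ | ⟨h1, h2⟩
      · exact hadjmq.ne h1.symm
      · exact hqs h1
    · have hm : m ∈ Wsz.support := Walk.snd_mem_support_of_mem_edges _ h
      have := dist_split hG Wsz hWsz hm
      have c1 : G.dist s m = 1 := adj_dist_one hsm
      omega
    · rw [Walk.edges_reverse, List.mem_reverse] at h
      have hm : m ∈ Wyz.support := Walk.snd_mem_support_of_mem_edges _ h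
      have := dist_split hG Wyz hWyz hm
      have c2 : G.dist y m = G.dist m y := dist_comm
      omega
    · rw [hE2] at h
      simp only [Walk.edges_cons, Walk.edges_nil, List.mem_singleton] at h
      rw [Sym2.eq_iff] at h
      rcases h with ⟨h1, h2⟩ | ⟨h1, h2⟩
      · exact hadjmq.ne h2
      · rw [h2] at hmy
        simp [dist_self] at hmy
  obtain ⟨t, htB, htq, htm, haq, ham⟩ := tri_walk hch hadjmq.symm B hedge
  have hBsup : t ∈ E1.support ∨ t ∈ Wsz.support ∨ t ∈ Wyz.support ∨ t ∈ E2.support := by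
    rw [hB] at htB
    rcases mem_support_append htB with h | h
    · exact Or.inl h
    rcases mem_support_append h with h | h
    · exact Or.inr (Or.inl h)
    rcases mem_support_append h with h | h
    · exact Or.inr (Or.inr (Or.inl (mem_support_reverse h)))
    · exact Or.inr (Or.inr (Or.inr h))
  have hmt1 : G.dist m t = 1 := adj_dist_one ham.symm
  have hqt1 : G.dist q t = 1 := adj_dist_one haq.symm
  have htri : G.dist m z ≤ G.dist m t + G.dist t z := hG.dist_triangle
  have hts_contra : t = s → False := by
    intro h
    have h1 : G.dist s y ≤ G.dist s q + G.dist q y := hG.dist_triangle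
    have c1 : G.dist s q = G.dist q s := dist_comm
    have c2 : G.dist q s = 1 := by rw [← h]; exact adj_dist_one haq.symm
    omega
  rcases hBsup with ht | ht | ht | ht
  · exfalso
    rw [hE1] at ht
    simp only [Walk.support_cons, Walk.support_nil, List.mem_cons, List.mem_singleton] at ht
    rcases ht with h | h | h
    · exact htm h
    · exact hts_contra h
    · simp at h
  · exfalso
    have hsplit := dist_split hG Wsz hWsz ht
    have hst0 : G.dist s t = 0 := by omega
    exact hts_contra ((hG.dist_eq_zero_iff).mp hst0).symm
  · have hsplit := dist_split hG Wyz hWyz ht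
    have hyt1 : G.dist y t ≤ 1 := by omega
    rcases Nat.eq_zero_or_pos (G.dist y t) with h0 | h0
    · exfalso
      have := (hG.dist_eq_zero_iff).mp h0
      subst this
      omega
    · exact ⟨t, ham, by omega, by omega⟩
  · exfalso
    rw [hE2] at ht
    simp only [Walk.support_cons, Walk.support_nil, List.mem_cons, List.mem_singleton] at ht
    rcases ht with h | h | h
    · subst h
      omega
    · exact htq h
    · simp at h

lemma QG4 (hG : G.Connected) (hch : KChordal G 3) {x m y z : V}
    (hxm : G.dist x m = 2) (hmy : G.dist m y = 2) (hxy : G.dist x y = 4)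
    (hk : G.dist x z ≤ G.dist m z) (hl : G.dist y z ≤ G.dist m z) : False := by
  have main : ∀ s t : V, G.Adj s m → G.dist x s = 1 → G.dist s z + 1 = G.dist m z →
      G.Adj t m → G.dist y t = 1 → G.dist t z + 1 = G.dist m z → False := by
    intro s t hsm hxs hsz htm hyt htz
    have hmt : G.dist m t = 1 := adj_dist_one htm.symm
    have hsy : G.dist s y = 3 := by
      have h1 : G.dist x y ≤ G.dist x s + G.dist s y := hG.dist_triangle
      have h2 : G.dist s y ≤ G.dist s m + G.dist m y := hG.dist_triangle
      have h3 : G.dist s m = 1 := adj_dist_one hsm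
      omega
    have hst : G.dist s t = 2 := by
      have h1 : G.dist s t ≤ G.dist s m + G.dist m t := hG.dist_triangle
      have h2 : G.dist s y ≤ G.dist s t + G.dist t y := hG.dist_triangle
      have h3 : G.dist s m = 1 := adj_dist_one hsm
      have c1 : G.dist t y = G.dist y t := dist_comm
      omega
    exact QG hG hch (y := t) (z := z) hsm (by omega) (by omega) (by omega) (by omega)
  rcases sideV hG hch hxm hmy hxy hk hl with ⟨s, hsm, hxs, hsz⟩ | ⟨t, htm, hyt, htz⟩
  · obtain ⟨t, htm, hyt, htz⟩ := sideV2 hG hch hxm hmy hxy hl hsm hxs hsz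
    exact main s t hsm hxs hsz htm hyt htz
  · have c1 : G.dist y m = 2 := by rw [SimpleGraph.dist_comm]; exact hmy
    have c2 : G.dist m x = 2 := by rw [SimpleGraph.dist_comm]; exact hxm
    have c3 : G.dist y x = 4 := by rw [SimpleGraph.dist_comm]; exact hxy
    obtain ⟨s, hsm, hxs, hsz⟩ := sideV2 hG hch c1 c2 c3 hk htm hyt htz
    exact main s t hsm hxs hsz htm hyt htz

lemma getVert_dist_le (hG : G.Connected) {x y : V} (W : G.Walk x y) (i : ℕ) :
    G.dist x (W.getVert i) ≤ i := by
  induction i with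
  | zero => simp [Walk.getVert_zero, dist_self]
  | succ i ih =>
    by_cases hi : i < W.length
    · have hadj := W.adj_getVert_succ hi
      have h1 : G.dist x (W.getVert (i+1)) ≤
          G.dist x (W.getVert i) + G.dist (W.getVert i) (W.getVert (i+1)) := hG.dist_triangle
      have h2 := adj_dist_one hadj
      omega
    · rw [Walk.getVert_of_length_le W (by omega : W.length ≤ i + 1)]
      rw [Walk.getVert_of_length_le W (by omega : W.length ≤ i)] at ih
      omega

lemma getVert_dist_ge (hG : G.Connected) {x y : V} (W : G.Walk x y) (j : ℕ) :
    G.dist (W.getVert (W.length - j)) y ≤ j := by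
  induction j with
  | zero => simp [Walk.getVert_length, dist_self]
  | succ j ih =>
    by_cases hj : W.length ≤ j
    · rw [show W.length - (j+1) = 0 from by omega, Walk.getVert_zero]
      have := dist_le W
      omega
    · have hi : W.length - (j+1) < W.length := by omega
      have hadj := W.adj_getVert_succ hi
      rw [show W.length - (j+1) + 1 = W.length - j from by omega] at hadj
      have h1 : G.dist (W.getVert (W.length - (j+1))) y ≤
          G.dist (W.getVert (W.length - (j+1))) (W.getVert (W.length - j)) +
          G.dist (W.getVert (W.length - j)) y := hG.dist_triangle
      have h2 := adj_dist_one hadj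
      omega

lemma getVert_dists (hG : G.Connected) {x y : V} (W : G.Walk x y) (hW : W.length = G.dist x y)
    {i : ℕ} (hi : i ≤ W.length) :
    G.dist x (W.getVert i) = i ∧ G.dist (W.getVert i) y = G.dist x y - i := by
  have h1 := getVert_dist_le hG W i
  have h2 := getVert_dist_ge hG W (W.length - i)
  rw [show W.length - (W.length - i) = i from by omega] at h2
  have h3 : G.dist x y ≤ G.dist x (W.getVert i) + G.dist (W.getVert i) y := hG.dist_triangle
  constructor <;> omega

section WithFintype
variable [Fintype V]

lemma dist_le_ecc (x z : V) : G.dist x z ≤ ecc G x := Finset.le_sup (Finset.mem_univ z)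

lemma grad_le_ecc (x : V) : grad G ≤ ecc G x := Nat.sInf_le ⟨x, rfl⟩

lemma ecc_between (hG : G.Connected) (hch : KChordal G 3) {x m y : V} (hxm : G.Adj x m)
    (h1 : G.dist x y = G.dist m y + 1) (h2 : 1 ≤ G.dist m y) :
    ecc G m ≤ max (ecc G x) (ecc G y) := by
  apply Finset.sup_le
  intro z _
  by_contra hcon
  push_neg at hcon
  have hx' : G.dist x z < G.dist m z :=
    lt_of_le_of_lt (dist_le_ecc x z) (lt_of_le_of_lt (le_max_left _ _) hcon)
  have hy' : G.dist y z < G.dist m z :=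
    lt_of_le_of_lt (dist_le_ecc y z) (lt_of_le_of_lt (le_max_right _ _) hcon)
  exact QG hG hch hxm h1 h2 hx' hy'

lemma center_dist (hG : G.Connected) (hch : KChordal G 3) {x y : V}
    (hx : x ∈ _root_.center G) (hy : y ∈ _root_.center G) :
    (G.induce (_root_.center G)).dist ⟨x, hx⟩ ⟨y, hy⟩ ≤ 3 := by
  haveI : Nonempty V := hG.nonempty
  have hxc : ecc G x = grad G := hx
  have hyc : ecc G y = grad G := hy
  obtain ⟨W, hW⟩ := hG.exists_walk_length_eq_dist x y
  -- centrality of the vertices of W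
  have hcent : ∀ i, i ≤ G.dist x y → ecc G (W.getVert i) = grad G := by
    intro i
    induction i with
    | zero => intro _; rw [Walk.getVert_zero]; exact hxc
    | succ i ih =>
      intro hi
      by_cases hiy : i + 1 = G.dist x y
      · rw [show i + 1 = W.length from by omega, Walk.getVert_length]; exact hyc
      · have g1 := (getVert_dists hG W hW (show i ≤ W.length from by omega)).2
        have g2 := (getVert_dists hG W hW (show i+1 ≤ W.length from by omega)).2
        have hie : ecc G (W.getVert (i+1)) ≤ max (ecc G (W.getVert i)) (ecc G y) := by
          apply ecc_between hG hch
          · exact W.adj_getVert_succ (by omega)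
          · omega
          · omega
        have hic := ih (by omega)
        have hgle := grad_le_ecc (G := G) (W.getVert (i+1))
        rw [hic, hyc, max_self] at hie
        omega
    -- d ≤ 3
  have hd3 : G.dist x y ≤ 3 := by
    by_contra hd4
    push_neg at hd4
    have ha := getVert_dists hG W hW (show 2 ≤ W.length from by omega)
    have hb := getVert_dists hG W hW (show 4 ≤ W.length from by omega)
    have hab : G.dist (W.getVert 2) (W.getVert 4) = 2 := by
      have h1 : G.dist x (W.getVert 4) ≤
        G.dist x (W.getVert 2) + G.dist (W.getVert 2) (W.getVert 4) := hG.dist_triangle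
      have h2 : G.dist (W.getVert 2) (W.getVert 4) ≤
          G.dist (W.getVert 2) (W.getVert 3) + G.dist (W.getVert 3) (W.getVert 4) :=
        hG.dist_triangle
      have e1 := adj_dist_one (W.adj_getVert_succ (show 2 < W.length from by omega))
      have e2 := adj_dist_one (W.adj_getVert_succ (show 3 < W.length from by omega))
      rw [show (2:ℕ)+1 = 3 from rfl] at e1
      rw [show (3:ℕ)+1 = 4 from rfl] at e2
      omega
    obtain ⟨z, _, hz⟩ := Finset.exists_mem_eq_sup (Finset.univ) Finset.univ_nonempty
      (G.dist (W.getVert 2))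
    have hza : ecc G (W.getVert 2) = G.dist (W.getVert 2) z := hz
    have hca : ecc G (W.getVert 2) = grad G := hcent 2 (by omega)
    have hcb : ecc G (W.getVert 4) = grad G := hcent 4 (by omega)
    apply QG4 hG hch ha.1 hab hb.1 (z := z)
    · calc G.dist x z ≤ ecc G x := dist_le_ecc x z
        _ = grad G := hxc
        _ = ecc G (W.getVert 2) := hca.symm
        _ = G.dist (W.getVert 2) z := hza
    · calc G.dist (W.getVert 4) z ≤ ecc G (W.getVert 4) := dist_le_ecc _ z
        _ = grad G := hcb
        _ = ecc G (W.getVert 2) := hca.symm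
        _ = G.dist (W.getVert 2) z := hza
  -- now build a walk of length ≤ 3 inside the center
  have hmem : ∀ i, i ≤ G.dist x y → W.getVert i ∈ _root_.center G := fun i hi => hcent i hi
  have hbd : ∀ (d : ℕ), G.dist x y = d → d ≤ 3 → (G.induce (_root_.center G)).dist ⟨x, hx⟩ ⟨y, hy⟩ ≤ 3 := by
    intro d hd _
    match d, hd with
    | 0, hd =>
      have hxy0 : x = y := (hG.dist_eq_zero_iff).mp hd
      subst hxy0
      rw [SimpleGraph.dist_self]
      omega
    | 1, hd =>
      have hadj : G.Adj x y := by
        have := W.adj_getVert_succ (show 0 < W.length from by omega)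
        rwa [Walk.getVert_zero, show (0:ℕ)+1 = W.length from by omega, Walk.getVert_length] at this
      have : (G.induce (_root_.center G)).Adj ⟨x, hx⟩ ⟨y, hy⟩ := by
        simp only [comap_adj, Function.Embedding.coe_subtype]
        exact hadj
      calc (G.induce (_root_.center G)).dist ⟨x, hx⟩ ⟨y, hy⟩ ≤ (Walk.cons this Walk.nil).length :=
            dist_le _
        _ ≤ 3 := by simp
    | 2, hd =>
      have h1 : G.Adj x (W.getVert 1) := by
        have := W.adj_getVert_succ (show 0 < W.length from by omega)
        rwa [Walk.getVert_zero] at this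
      have h2 : G.Adj (W.getVert 1) y := by
        have := W.adj_getVert_succ (show 1 < W.length from by omega)
        rwa [show (1:ℕ)+1 = W.length from by omega, Walk.getVert_length] at this
      have hm1 : W.getVert 1 ∈ _root_.center G := hmem 1 (by omega)
      have a1 : (G.induce (_root_.center G)).Adj ⟨x, hx⟩ ⟨W.getVert 1, hm1⟩ := by
        simp only [comap_adj, Function.Embedding.coe_subtype]; exact h1
      have a2 : (G.induce (_root_.center G)).Adj ⟨W.getVert 1, hm1⟩ ⟨y, hy⟩ := by
        simp only [comap_adj, Function.Embedding.coe_subtype]; exact h2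
      calc (G.induce (_root_.center G)).dist ⟨x, hx⟩ ⟨y, hy⟩
          ≤ (Walk.cons a1 (Walk.cons a2 Walk.nil)).length := dist_le _
        _ ≤ 3 := by simp
    | 3, hd =>
      have h1 : G.Adj x (W.getVert 1) := by
        have := W.adj_getVert_succ (show 0 < W.length from by omega)
        rwa [Walk.getVert_zero] at this
      have h2 : G.Adj (W.getVert 1) (W.getVert 2) :=
        W.adj_getVert_succ (show 1 < W.length from by omega)
      have h3 : G.Adj (W.getVert 2) y := by
        have := W.adj_getVert_succ (show 2 < W.length from by omega)
        rwa [show (2:ℕ)+1 = W.length from by omega, Walk.getVert_length] at this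
      have hm1 : W.getVert 1 ∈ _root_.center G := hmem 1 (by omega)
      have hm2 : W.getVert 2 ∈ _root_.center G := hmem 2 (by omega)
      have a1 : (G.induce (_root_.center G)).Adj ⟨x, hx⟩ ⟨W.getVert 1, hm1⟩ := by
        simp only [comap_adj, Function.Embedding.coe_subtype]; exact h1
      have a2 : (G.induce (_root_.center G)).Adj ⟨W.getVert 1, hm1⟩ ⟨W.getVert 2, hm2⟩ := by
        simp only [comap_adj, Function.Embedding.coe_subtype]; exact h2
      have a3 : (G.induce (_root_.center G)).Adj ⟨W.getVert 2, hm2⟩ ⟨y, hy⟩ := by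
        simp only [comap_adj, Function.Embedding.coe_subtype]; exact h3
      calc (G.induce (_root_.center G)).dist ⟨x, hx⟩ ⟨y, hy⟩
          ≤ (Walk.cons a1 (Walk.cons a2 (Walk.cons a3 Walk.nil))).length := dist_le _
        _ ≤ 3 := by simp
  exact hbd (G.dist x y) rfl hd3


end WithFintype

end CCC

theorem diam_center_le_three [Fintype V] (G : SimpleGraph V) (hG : G.Connected)
    (hch : KChordal G 3) : gdiam (G.induce (_root_.center G)) ≤ 3 := by
  unfold gdiam
  apply Finset.sup_le
  intro a _
  unfold ecc
  apply Finset.sup_le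
  intro b _
  exact CCC.center_dist hG hch a.2 b.2
end

section
/- If G is a connected chordal graph and P is an induced path in G both of whose endpoints lie in the center C(G), then every vertex of P lies in C(G). -/
open SimpleGraph

variable {V : Type*}

section Helpers
variable {G : SimpleGraph V}

/-- An induced path given as an `ℕ`-indexed function (vertices `w 0, …, w m`). -/
def IndPath (G : SimpleGraph V) (w : ℕ → V) (m : ℕ) : Prop :=
  (∀ i j, i ≤ m → j ≤ m → w i = w j → i = j) ∧
  (∀ i j, i ≤ m → j ≤ m → (G.Adj (w i) (w j) ↔ (i + 1 = j ∨ j + 1 = i)))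

lemma exists_geodesic (hG : G.Connected) (s t : V) :
    ∃ w : ℕ → V, w 0 = s ∧ w (G.dist s t) = t ∧
      ∀ i j, i ≤ j → j ≤ G.dist s t → G.dist (w i) (w j) = j - i := by
  obtain ⟨p, hp⟩ := hG.exists_walk_length_eq_dist s t
  refine ⟨p.getVert, p.getVert_zero, by rw [← hp]; exact p.getVert_length, ?_⟩
  have hadj : ∀ i, i < G.dist s t → G.Adj (p.getVert i) (p.getVert (i + 1)) := by
    intro i hi; exact p.adj_getVert_succ (by omega)
  have hub : ∀ i j, i ≤ j → j ≤ G.dist s t → G.dist (p.getVert i) (p.getVert j) ≤ j - i := by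
    intro i j hij hjm
    induction j with
    | zero => simp_all
    | succ j ihj =>
      rcases Nat.lt_or_ge i (j+1) with h | h
      · have h1 : G.dist (p.getVert i) (p.getVert j) ≤ j - i := ihj (by omega) (by omega)
        have h2 : G.dist (p.getVert j) (p.getVert (j+1)) = 1 :=
          dist_eq_one_iff_adj.2 (hadj j (by omega))
        have := hG.dist_triangle (u := p.getVert i) (v := p.getVert j) (w := p.getVert (j+1))
        omega
      · have : i = j + 1 := by omega
        subst this; simp
  intro i j hij hjm
  have h1 : G.dist (p.getVert 0) (p.getVert i) ≤ i := by
    have := hub 0 i (by omega) (by omega); omega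
  have h2 : G.dist (p.getVert j) (p.getVert (G.dist s t)) ≤ G.dist s t - j :=
    hub j _ hjm le_rfl
  have el : p.getVert (G.dist s t) = t := by rw [← hp]; exact p.getVert_length
  have h3 : G.dist s t ≤ G.dist (p.getVert 0) (p.getVert i) + G.dist (p.getVert i) (p.getVert j)
      + G.dist (p.getVert j) (p.getVert (G.dist s t)) := by
    have t1 := hG.dist_triangle (u := p.getVert 0) (v := p.getVert i) (w := p.getVert (G.dist s t))
    have t2 := hG.dist_triangle (u := p.getVert i) (v := p.getVert j) (w := p.getVert (G.dist s t))
    have e : G.dist (p.getVert 0) (p.getVert (G.dist s t)) = G.dist s t := by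
      rw [p.getVert_zero, el]
    omega
  have h4 := hub i j hij hjm
  omega

lemma exists_adj_dist (hG : G.Connected) {x y : V} {d : ℕ} (h : G.dist x y = d + 1) :
    ∃ s, G.Adj s y ∧ G.dist x s = d := by
  obtain ⟨w, h0, hl, hd⟩ := exists_geodesic hG x y
  rw [h] at hl
  refine ⟨w d, ?_, ?_⟩
  · have := hd d (d+1) (by omega) (by omega)
    have hadj := dist_eq_one_iff_adj.1 (by rw [this]; omega)
    rwa [hl] at hadj
  · have := hd 0 d (by omega) (by omega)
    rw [h0] at this; omega

lemma geodesic_indPath (hG : G.Connected) (w : ℕ → V) (m : ℕ)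
    (hd : ∀ i j, i ≤ j → j ≤ m → G.dist (w i) (w j) = j - i) : IndPath G w m := by
  have key : ∀ i j, i ≤ j → j ≤ m → (w i = w j → i = j) ∧
      (G.Adj (w i) (w j) ↔ (i + 1 = j ∨ j + 1 = i)) := by
    intro i j hij hjm
    have hdd := hd i j hij hjm
    constructor
    · intro he
      have : G.dist (w i) (w j) = 0 := by rw [he, dist_self]
      omega
    · constructor
      · intro ha
        have h1 : G.dist (w i) (w j) = 1 := dist_eq_one_iff_adj.2 ha
        omega
      · intro hc
        have : j = i + 1 := by omega
        subst this
        exact dist_eq_one_iff_adj.1 (by omega)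
  constructor
  · intro i j hi hj he
    rcases Nat.le_total i j with h | h
    · exact (key i j h hj).1 he
    · exact ((key j i h hi).1 he.symm).symm
  · intro i j hi hj
    rcases Nat.le_total i j with h | h
    · have := (key i j h hj).2; tauto
    · have := (key j i h hi).2
      rw [adj_comm] at this; tauto

/-- A chordless cycle, described as two glued induced paths, contradicts chordality. -/
lemma cyc_contra (hch : KChordal G 3) (α β : ℕ → V) (na nb : ℕ) (hna : 2 ≤ na)
    (hαinj : ∀ i j, i ≤ na → j ≤ na → α i = α j → i = j)
    (hαadj : ∀ i j, i ≤ na → j ≤ na → (G.Adj (α i) (α j) ↔ (i + 1 = j ∨ j + 1 = i)))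
    (hβinj : ∀ i j, i ≤ nb → j ≤ nb → β i = β j → i = j)
    (hβadj : ∀ i j, i ≤ nb → j ≤ nb → (G.Adj (β i) (β j) ↔ (i + 1 = j ∨ j + 1 = i)))
    (hdisj : ∀ i j, i ≤ na → j ≤ nb → α i ≠ β j)
    (h1 : G.Adj (α na) (β 0)) (h2 : G.Adj (β nb) (α 0))
    (hcross : ∀ i j, i ≤ na → j ≤ nb → G.Adj (α i) (β j) →
      (i = na ∧ j = 0) ∨ (i = 0 ∧ j = nb)) : False := by
  set N := na + nb + 2 with hN
  set c : ℕ → V := fun i => if i ≤ na then α i else β (i - na - 1) with hc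
  have hcα : ∀ i, i ≤ na → c i = α i := by intro i hi; simp [hc, hi]
  have hcβ : ∀ i, na < i → c i = β (i - na - 1) := by
    intro i hi; simp [hc, Nat.not_le.2 hi]
  have hm : ∀ z, z < N → ((z + 1) % N = z + 1 ∧ z ≠ N - 1) ∨ ((z + 1) % N = 0 ∧ z = N - 1) := by
    intro z hz
    by_cases h : z = N - 1
    · right
      refine ⟨?_, h⟩
      rw [h, Nat.sub_add_cancel (by omega)]
      exact Nat.mod_self N
    · left; exact ⟨Nat.mod_eq_of_lt (by omega), h⟩
  have cinj : ∀ a b, a < N → b < N → c a = c b → a = b := by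
    intro a b ha hb he
    rcases le_or_gt a na with h1a | h1a <;> rcases le_or_gt b na with h1b | h1b
    · rw [hcα a h1a, hcα b h1b] at he; exact hαinj a b h1a h1b he
    · rw [hcα a h1a, hcβ b h1b] at he
      exact absurd he (hdisj a (b - na - 1) h1a (by omega))
    · rw [hcβ a h1a, hcα b h1b] at he
      exact absurd he.symm (hdisj b (a - na - 1) h1b (by omega))
    · rw [hcβ a h1a, hcβ b h1b] at he
      have := hβinj _ _ (by omega) (by omega) he; omega
  have cadj : ∀ a b, a < N → b < N →
      (G.Adj (c a) (c b) ↔ (a = (b + 1) % N ∨ b = (a + 1) % N)) := by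
    intro a b ha hb
    rcases le_or_gt a na with h1a | h1a <;> rcases le_or_gt b na with h1b | h1b
    · rw [hcα a h1a, hcα b h1b, hαadj a b h1a h1b]
      rcases hm a ha with ⟨ea, ea'⟩ | ⟨ea, ea'⟩ <;> rcases hm b hb with ⟨eb, eb'⟩ | ⟨eb, eb'⟩ <;>
        rw [ea, eb] <;> omega
    · rw [hcα a h1a, hcβ b h1b]
      have hj : b - na - 1 ≤ nb := by omega
      constructor
      · intro h
        rcases hcross a (b - na - 1) h1a hj h with ⟨e1, e2⟩ | ⟨e1, e2⟩ <;>
          rcases hm a ha with ⟨ea, ea'⟩ | ⟨ea, ea'⟩ <;>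
          rcases hm b hb with ⟨eb, eb'⟩ | ⟨eb, eb'⟩ <;> rw [ea, eb] <;> omega
      · intro h
        have key : (a = na ∧ b - na - 1 = 0) ∨ (a = 0 ∧ b - na - 1 = nb) := by
          rcases hm a ha with ⟨ea, ea'⟩ | ⟨ea, ea'⟩ <;>
            rcases hm b hb with ⟨eb, eb'⟩ | ⟨eb, eb'⟩ <;> rw [ea, eb] at h <;> omega
        rcases key with ⟨e1, e2⟩ | ⟨e1, e2⟩
        · rw [e1, e2]; exact h1
        · rw [e1, e2]; exact h2.symm
    · rw [hcβ a h1a, hcα b h1b]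
      have hi : a - na - 1 ≤ nb := by omega
      constructor
      · intro h
        rcases hcross b (a - na - 1) h1b hi h.symm with ⟨e1, e2⟩ | ⟨e1, e2⟩ <;>
          rcases hm a ha with ⟨ea, ea'⟩ | ⟨ea, ea'⟩ <;>
          rcases hm b hb with ⟨eb, eb'⟩ | ⟨eb, eb'⟩ <;> rw [ea, eb] <;> omega
      · intro h
        have key : (b = na ∧ a - na - 1 = 0) ∨ (b = 0 ∧ a - na - 1 = nb) := by
          rcases hm a ha with ⟨ea, ea'⟩ | ⟨ea, ea'⟩ <;>
            rcases hm b hb with ⟨eb, eb'⟩ | ⟨eb, eb'⟩ <;> rw [ea, eb] at h <;> omega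
        rcases key with ⟨e1, e2⟩ | ⟨e1, e2⟩
        · rw [e1, e2]; exact h1.symm
        · rw [e1, e2]; exact h2
    · rw [hcβ a h1a, hcβ b h1b, hβadj _ _ (by omega) (by omega)]
      rcases hm a ha with ⟨ea, ea'⟩ | ⟨ea, ea'⟩ <;> rcases hm b hb with ⟨eb, eb'⟩ | ⟨eb, eb'⟩ <;>
        rw [ea, eb] <;> omega
  have hNZ : NeZero N := ⟨by omega⟩
  have hone : (1 : ZMod N).val = 1 := ZMod.val_one'' (by omega)
  apply hch N (by omega)
  refine ⟨by omega, fun i => c i.val, ?_, ?_⟩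
  · intro i j he
    exact ZMod.val_injective N (cinj _ _ (ZMod.val_lt i) (ZMod.val_lt j) he)
  · intro i j
    rw [cadj _ _ (ZMod.val_lt i) (ZMod.val_lt j)]
    have e1 : ∀ z : ZMod N, (z + 1).val = (z.val + 1) % N := by
      intro z; rw [ZMod.val_add, hone]
    constructor
    · intro h
      rcases h with h | h
      · left; apply ZMod.val_injective; rw [e1]; exact h
      · right; apply ZMod.val_injective; rw [e1]; exact h
    · intro h
      rcases h with h | h
      · left; rw [h, e1]
      · right; rw [h, e1]

lemma ball_mconvex (hG : G.Connected) (hch : KChordal G 3) :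
    ∀ (k : ℕ) (x : V) (w : ℕ → V) (m : ℕ), IndPath G w m →
      G.dist x (w 0) ≤ k → G.dist x (w m) ≤ k → ∀ i, i ≤ m → G.dist x (w i) ≤ k := by
  intro k
  induction k with
  | zero =>
    intro x w m hip h0 hm i hi
    have e0 : x = w 0 := hG.dist_eq_zero_iff.1 (by omega)
    have em : x = w m := hG.dist_eq_zero_iff.1 (by omega)
    have hm0 : (0 : ℕ) = m := hip.1 0 m (by omega) le_rfl (e0 ▸ em)
    have : i = 0 := by omega
    rw [this, ← e0, dist_self]
  | succ k ih =>
    intro x w m hip h0 hm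
    by_contra hcon
    push_neg at hcon
    obtain ⟨i₀, hi₀m, hi₀⟩ := hcon
    classical
    set P : ℕ → Prop := fun j => G.dist x (w j) ≤ k + 1 with hP
    have hP0 : P 0 := h0
    have hPi₀ : ¬ P i₀ := by simp only [hP]; omega
    -- the last index `a ≤ i₀` still in the ball
    set a := Nat.findGreatest P i₀ with ha
    have haP : P a := Nat.findGreatest_spec (Nat.zero_le i₀) hP0
    have hai : a ≤ i₀ := Nat.findGreatest_le i₀
    have hane : a ≠ i₀ := fun h => hPi₀ (h ▸ haP)
    have hamax : ∀ j, a < j → j ≤ i₀ → ¬ P j :=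
      fun j hj hj' => Nat.findGreatest_is_greatest hj hj'
    -- the first index `b ≥ i₀` back in the ball
    have hex : ∃ d, i₀ + d ≤ m ∧ P (i₀ + d) := by
      refine ⟨m - i₀, by omega, ?_⟩
      have e : i₀ + (m - i₀) = m := by omega
      rw [e]; exact hm
    set b := i₀ + Nat.find hex with hb
    obtain ⟨hbm, hbP⟩ := Nat.find_spec hex
    have hbmin : ∀ j, i₀ ≤ j → j < b → ¬ P j := by
      intro j hj hj' hPj
      refine Nat.find_min hex (m := j - i₀) (by omega) ⟨by omega, ?_⟩
      have e : i₀ + (j - i₀) = j := by omega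
      rw [e]; exact hPj
    have hib : i₀ < b := by
      rcases Nat.lt_or_ge i₀ b with h | h
      · exact h
      · exact absurd (by have e : b = i₀ := by omega
                         rw [← e]; exact hbP) hPi₀
    have hmid : ∀ j, a < j → j < b → ¬ P j := by
      intro j hj hj'
      rcases le_or_gt j i₀ with h | h
      · exact hamax j hj h
      · exact hbmin j h.le hj'
    have hab : a + 2 ≤ b := by omega
    have hbm' : b ≤ m := hbm
    -- vertices strictly inside (a, b) are far from the ball of radius k
    have hint : ∀ j, a < j → j < b → ∀ z, G.dist x z ≤ k → w j ≠ z ∧ ¬ G.Adj (w j) z := by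
      intro j hj hj' z hz
      have hnP := hmid j hj hj'
      constructor
      · rintro rfl
        exact hnP (by simp only [hP]; omega)
      · intro hA
        apply hnP
        have hz1 : G.dist z (w j) = 1 := dist_eq_one_iff_adj.2 hA.symm
        have htr := hG.dist_triangle (u := x) (v := z) (w := w j)
        simp only [hP]; omega
    -- choose gate vertices s, t in the ball of radius k
    have hsel : ∀ y : V, G.dist x y ≤ k + 1 → ∃ s, G.dist x s ≤ k ∧ (s = y ∨ G.Adj s y) := by
      intro y hy
      rcases le_or_gt (G.dist x y) k with h | h
      · exact ⟨y, h, Or.inl rfl⟩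
      · obtain ⟨s, hs1, hs2⟩ := exists_adj_dist hG (show G.dist x y = k + 1 by omega)
        exact ⟨s, by omega, Or.inr hs1⟩
    obtain ⟨s, hsk, hsa⟩ := hsel (w a) haP
    obtain ⟨t, htk, hta⟩ := hsel (w b) hbP
    -- geodesic from s to t; it stays in the ball of radius k by induction hypothesis
    obtain ⟨g, hg0, hgl, hgd⟩ := exists_geodesic hG s t
    set mg := G.dist s t with hmg
    have hgip : IndPath G g mg := geodesic_indPath hG g mg hgd
    have hgball : ∀ r, r ≤ mg → G.dist x (g r) ≤ k := fun r hr =>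
      ih x g mg hgip (by rw [hg0]; exact hsk) (by rw [hgl]; exact htk) r hr
    -- attachment predicates
    set Pb : ℕ → Prop := fun j => g j = w b ∨ G.Adj (g j) (w b) with hPbdef
    have hqex : ∃ j, j ≤ mg ∧ Pb j :=
      ⟨mg, le_rfl, by show g mg = w b ∨ G.Adj (g mg) (w b); rw [hgl]; exact hta⟩
    set q := Nat.find hqex with hq
    obtain ⟨hqm, hqPb⟩ := Nat.find_spec hqex
    have hqmin : ∀ j, j < q → ¬ Pb j := fun j hj hPj =>
      Nat.find_min hqex hj ⟨by omega, hPj⟩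
    set Pa : ℕ → Prop := fun j => g j = w a ∨ G.Adj (g j) (w a) with hPadef
    have hPa0 : Pa 0 := by rw [hPadef]; simp only []; rw [hg0]; exact hsa
    set p := Nat.findGreatest Pa q with hp
    have hpPa : Pa p := Nat.findGreatest_spec (Nat.zero_le q) hPa0
    have hpq : p ≤ q := Nat.findGreatest_le q
    have hpmax : ∀ j, p < j → j ≤ q → ¬ Pa j :=
      fun j h h' => Nat.findGreatest_is_greatest h h'
    have hnab : w a ≠ w b := fun h => by have := hip.1 a b (by omega) (by omega) h; omega
    have hnadj : ¬ G.Adj (w a) (w b) := by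
      rw [hip.2 a b (by omega) (by omega)]; omega
    -- the path segment
    have hαinj : ∀ i j, i ≤ b - a → j ≤ b - a → w (a + i) = w (a + j) → i = j := by
      intro i j hi hj he
      have := hip.1 (a + i) (a + j) (by omega) (by omega) he; omega
    have hαadj : ∀ i j, i ≤ b - a → j ≤ b - a →
        (G.Adj (w (a + i)) (w (a + j)) ↔ (i + 1 = j ∨ j + 1 = i)) := by
      intro i j hi hj
      rw [hip.2 (a + i) (a + j) (by omega) (by omega)]; omega
    have hana : a + (b - a) = b := by omega
    rcases Nat.lt_or_ge p q with hlt | hge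
    · -- case p < q : the connecting segment in the ball is g p, …, g q (reversed)
      have hAq : G.Adj (g q) (w b) ∧ g q ≠ w b := by
        have hne : g q ≠ w b := by
          intro he
          refine hqmin (q - 1) (by omega) (Or.inr ?_)
          have : G.Adj (g (q - 1)) (g q) := by
            rw [hgip.2 (q - 1) q (by omega) (by omega)]; omega
          rwa [he] at this
        rcases hqPb with h | h
        · exact absurd h hne
        · exact ⟨h, hne⟩
      have hAp : G.Adj (g p) (w a) ∧ g p ≠ w a := by
        have hne : g p ≠ w a := by
          intro he
          refine hpmax (p + 1) (by omega) (by omega) (Or.inr ?_)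
          have : G.Adj (g p) (g (p + 1)) := by
            rw [hgip.2 p (p + 1) (by omega) (by omega)]; omega
          rw [he] at this; exact this.symm
        rcases hpPa with h | h
        · exact absurd h hne
        · exact ⟨h, hne⟩
      -- vertices of the segment avoid w a, w b
      have hgna : ∀ r, p ≤ r → r ≤ q → g r ≠ w a := by
        intro r h1 h2 he
        rcases Nat.lt_or_ge p r with h | h
        · exact hpmax r h h2 (Or.inl he)
        · exact hAp.2 (by have : r = p := by omega
                          rwa [← this])
      have hgnb : ∀ r, p ≤ r → r ≤ q → g r ≠ w b := by
        intro r h1 h2 he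
        rcases Nat.lt_or_ge r q with h | h
        · exact hqmin r h (Or.inl he)
        · exact hAq.2 (by have : r = q := by omega
                          rwa [← this])
      refine cyc_contra hch (fun i => w (a + i)) (fun j => g (q - j)) (b - a) (q - p)
        (by omega) hαinj hαadj ?_ ?_ ?_ ?_ ?_ ?_
      · intro i j hi hj he
        have := hgip.1 (q - i) (q - j) (by omega) (by omega) he; omega
      · intro i j hi hj
        rw [hgip.2 (q - i) (q - j) (by omega) (by omega)]; omega
      · -- disjointness
        intro i j hi hj he
        set r := q - j with hr
        have hrp : p ≤ r := by omega
        have hrq : r ≤ q := by omega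
        rcases Nat.eq_zero_or_pos i with h0' | h0'
        · rw [h0', Nat.add_zero] at he
          exact hgna r hrp hrq he.symm
        · rcases Nat.lt_or_ge i (b - a) with hlt' | hge'
          · exact (hint (a + i) (by omega) (by omega) (g r)
              (hgball r (by omega))).1 he
          · have : i = b - a := by omega
            rw [this, hana] at he
            exact hgnb r hrp hrq he.symm
      · show G.Adj (w (a + (b - a))) (g (q - 0))
        rw [hana, Nat.sub_zero]; exact hAq.1.symm
      · show G.Adj (g (q - (q - p))) (w (a + 0))
        have e : q - (q - p) = p := by omega
        rw [e, Nat.add_zero]; exact hAp.1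
      · -- cross adjacency
        intro i j hi hj hAd
        set r := q - j with hr
        have hrp : p ≤ r := by omega
        have hrq : r ≤ q := by omega
        rcases Nat.eq_zero_or_pos i with h0' | h0'
        · right
          refine ⟨h0', ?_⟩
          rw [h0', Nat.add_zero] at hAd
          have hPar : Pa r := Or.inr hAd.symm
          rcases Nat.lt_or_ge p r with h | h
          · exact absurd hPar (hpmax r h hrq)
          · omega
        · rcases Nat.lt_or_ge i (b - a) with hlt' | hge'
          · exact absurd hAd
              (hint (a + i) (by omega) (by omega) (g r) (hgball r (by omega))).2
          · left
            have hi' : i = b - a := by omega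
            refine ⟨hi', ?_⟩
            rw [hi', hana] at hAd
            have hPbr : Pb r := Or.inr hAd.symm
            rcases Nat.lt_or_ge r q with h | h
            · exact absurd hPbr (hqmin r h)
            · omega
    · -- case p = q : a single connecting vertex g p
      have hpq' : p = q := by omega
      have hqPb' : Pb p := hpq' ▸ hqPb
      have hAa : G.Adj (g p) (w a) ∧ g p ≠ w a := by
        rcases hpPa with h | h
        · exfalso
          rcases hqPb' with h' | h'
          · exact hnab (h.symm.trans h')
          · rw [h] at h'; exact hnadj h'
        · refine ⟨h, fun he => ?_⟩
          rw [he] at h; exact G.irrefl h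
      have hAb : G.Adj (g p) (w b) ∧ g p ≠ w b := by
        rcases hqPb' with h | h
        · exfalso
          rcases hpPa with h' | h'
          · exact hnab (h'.symm.trans h)
          · rw [h] at h'; exact hnadj h'.symm
        · refine ⟨h, fun he => ?_⟩
          rw [he] at h; exact G.irrefl h
      refine cyc_contra hch (fun i => w (a + i)) (fun _ => g p) (b - a) 0
        (by omega) hαinj hαadj ?_ ?_ ?_ ?_ ?_ ?_
      · intro i j hi hj _; omega
      · intro i j hi hj
        constructor
        · intro h; exact absurd h (G.irrefl)
        · intro h; omega
      · intro i j hi hj he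
        rcases Nat.eq_zero_or_pos i with h0' | h0'
        · rw [h0', Nat.add_zero] at he
          exact hAa.2 he.symm
        · rcases Nat.lt_or_ge i (b - a) with hlt' | hge'
          · exact (hint (a + i) (by omega) (by omega) (g p)
              (hgball p (by omega))).1 he
          · have : i = b - a := by omega
            rw [this, hana] at he
            exact hAb.2 he.symm
      · show G.Adj (w (a + (b - a))) (g p)
        rw [hana]; exact hAb.1.symm
      · show G.Adj (g p) (w (a + 0))
        rw [Nat.add_zero]; exact hAa.1
      · intro i j hi hj hAd
        have hj0 : j = 0 := by omega
        rcases Nat.eq_zero_or_pos i with h0' | h0'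
        · right; exact ⟨h0', hj0⟩
        · rcases Nat.lt_or_ge i (b - a) with hlt' | hge'
          · exact absurd hAd
              (hint (a + i) (by omega) (by omega) (g p) (hgball p (by omega))).2
          · left; exact ⟨by omega, hj0⟩

end Helpers

theorem induced_path_in_center [Fintype V] (G : SimpleGraph V) (hG : G.Connected)
    (hch : KChordal G 3) (n : ℕ) (f : Fin (n + 1) → V) (hinj : Function.Injective f)
    (hadj : ∀ i j : Fin (n + 1), G.Adj (f i) (f j) ↔ ((i : ℕ) + 1 = j ∨ (j : ℕ) + 1 = i))
    (h0 : f 0 ∈ _root_.center G) (hlast : f (Fin.last n) ∈ _root_.center G) :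
    ∀ i, f i ∈ _root_.center G := by
  intro i
  set w : ℕ → V := fun j => if h : j ≤ n then f ⟨j, by omega⟩ else f 0 with hw
  have hwv : ∀ j (hj : j ≤ n), w j = f ⟨j, Nat.lt_succ_of_le hj⟩ := by
    intro j hj; simp [hw, hj]
  have hip : IndPath G w n := by
    constructor
    · intro i' j' hi hj he
      rw [hwv i' hi, hwv j' hj] at he
      have := hinj he
      simpa using congrArg Fin.val this
    · intro i' j' hi hj
      rw [hwv i' hi, hwv j' hj, hadj]
  have hw0 : w 0 = f 0 := by
    rw [hwv 0 (Nat.zero_le n)]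
    simp
  have hwn : w n = f (Fin.last n) := by
    rw [hwv n le_rfl]
    rfl
  have hwi : w (i : ℕ) = f i := by
    rw [hwv i (Fin.is_le i)]
  have hkey : ∀ y : V, G.dist (f i) y ≤ grad G := by
    intro y
    have h0' : G.dist y (w 0) ≤ grad G := by
      rw [hw0, SimpleGraph.dist_comm]
      calc G.dist (f 0) y ≤ ecc G (f 0) := Finset.le_sup (Finset.mem_univ y)
        _ = grad G := h0
    have hn' : G.dist y (w n) ≤ grad G := by
      rw [hwn, SimpleGraph.dist_comm]
      calc G.dist (f (Fin.last n)) y ≤ ecc G (f (Fin.last n)) := Finset.le_sup (Finset.mem_univ y)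
        _ = grad G := hlast
    have := ball_mconvex hG hch (grad G) y w n hip h0' hn' (i : ℕ) (Fin.is_le i)
    rw [hwi] at this
    rw [SimpleGraph.dist_comm]; exact this
  have hub : ecc G (f i) ≤ grad G := Finset.sup_le fun y _ => hkey y
  have hlb : grad G ≤ ecc G (f i) := Nat.sInf_le ⟨f i, rfl⟩
  exact le_antisymm hub hlb
end

section
/- If G is a connected chordal graph, then the subgraph induced by the center C(G) is connected. -/
open SimpleGraph

variable {V : Type*}

variable {G : SimpleGraph V}

namespace SimpleGraph.Walk

lemma length_drop' {u v : V} (p : G.Walk u v) (n : ℕ) :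
    (p.drop n).length = p.length - n := by
  induction p generalizing n with
  | nil => cases n <;> simp [drop]
  | cons h q ih =>
    cases n with
    | zero => simp [drop]
    | succ n => simpa [drop] using ih n

lemma support_drop_subset' {u v : V} (p : G.Walk u v) (n : ℕ) :
    (p.drop n).support ⊆ p.support := by
  induction p generalizing n with
  | nil => cases n <;> simp [drop, Walk.getVert_of_length_le]
  | cons h q ih =>
    cases n with
    | zero => simp [drop]
    | succ n =>
      intro x hx
      simp only [drop, support_copy] at hx
      exact List.mem_cons_of_mem _ (ih n hx)

end SimpleGraph.Walk

namespace SimpleGraph.Walk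

lemma splice_eq {u v : V} (p : G.Walk u v) (i j : ℕ) (hij : i < j) (hj : j ≤ p.length)
    (h : p.getVert i = p.getVert j) :
    ∃ q : G.Walk u v, q.length < p.length ∧ q.support ⊆ p.support := by
  induction p generalizing i j with
  | nil => simp at hj; omega
  | @cons a b c hab q ih =>
    cases i with
    | zero =>
      refine ⟨((Walk.cons hab q).drop j).copy (by simpa using h.symm) rfl, ?_, ?_⟩
      · simp only [length_copy, length_drop', length_cons]; omega
      · rw [support_copy]; exact support_drop_subset' _ j
    | succ i =>
      cases j with
      | zero => omega
      | succ j =>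
        obtain ⟨q₂, hq₂, hsub⟩ := ih i j (by omega) (by simpa using hj)
          (by simpa [Walk.getVert_cons_succ] using h)
        exact ⟨Walk.cons hab q₂, by simp only [length_cons]; omega, by
          simp only [support_cons]
          exact List.cons_subset_cons _ hsub⟩

lemma splice_adj {u v : V} (p : G.Walk u v) (i j : ℕ) (hij : i + 1 < j) (hj : j ≤ p.length)
    (h : G.Adj (p.getVert i) (p.getVert j)) :
    ∃ q : G.Walk u v, q.length < p.length ∧ q.support ⊆ p.support := by
  induction p generalizing i j with
  | nil => simp at hj; omega
  | @cons a b c hab q ih =>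
    cases i with
    | zero =>
      have hj' : j ≤ q.length + 1 := by simpa using hj
      refine ⟨Walk.cons (by simpa using h) ((Walk.cons hab q).drop j), ?_, ?_⟩
      · simp only [length_cons, length_drop']; omega
      · rw [support_cons]
        intro x hx
        rcases List.mem_cons.mp hx with rfl | hx
        · exact start_mem_support _
        · exact support_drop_subset' _ j hx
    | succ i =>
      cases j with
      | zero => omega
      | succ j =>
        obtain ⟨q₂, hq₂, hsub⟩ := ih i j (by omega) (by simpa using hj)
          (by simpa [Walk.getVert_cons_succ] using h)
        exact ⟨Walk.cons hab q₂, by simp only [length_cons]; omega, by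
          simp only [support_cons]
          exact List.cons_subset_cons _ hsub⟩

end SimpleGraph.Walk

namespace SimpleGraph.Walk

lemma exists_induced_walk_aux {u v : V} (S : Set V) :
    ∀ n (p0 : G.Walk u v), p0.length ≤ n → (∀ x ∈ p0.support, x ∈ S) →
    ∃ R : G.Walk u v, (∀ x ∈ R.support, x ∈ S) ∧
      (∀ i j, i < j → j ≤ R.length → R.getVert i ≠ R.getVert j) ∧
      (∀ i j, i + 1 < j → j ≤ R.length → ¬ G.Adj (R.getVert i) (R.getVert j)) := by
  intro n
  induction n with
  | zero =>
    intro p0 hlen hS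
    exact ⟨p0, hS, fun i j hij hj => by omega, fun i j hij hj => by omega⟩
  | succ n ih =>
    intro p0 hlen hS
    by_cases hbad : (∃ i j, i < j ∧ j ≤ p0.length ∧ p0.getVert i = p0.getVert j) ∨
        (∃ i j, i + 1 < j ∧ j ≤ p0.length ∧ G.Adj (p0.getVert i) (p0.getVert j))
    · obtain ⟨q, hq, hsub⟩ :
          ∃ q : G.Walk u v, q.length < p0.length ∧ q.support ⊆ p0.support := by
        rcases hbad with ⟨i, j, hij, hj, h⟩ | ⟨i, j, hij, hj, h⟩
        · exact splice_eq p0 i j hij hj h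
        · exact splice_adj p0 i j hij hj h
      exact ih q (by omega) (fun x hx => hS x (hsub hx))
    · push_neg at hbad
      exact ⟨p0, hS, fun i j hij hj => hbad.1 i j hij hj,
        fun i j hij hj => hbad.2 i j hij hj⟩

lemma exists_induced_walk {u v : V} (S : Set V) (p0 : G.Walk u v)
    (h0 : ∀ x ∈ p0.support, x ∈ S) :
    ∃ R : G.Walk u v, (∀ x ∈ R.support, x ∈ S) ∧
      (∀ i j, i < j → j ≤ R.length → R.getVert i ≠ R.getVert j) ∧
      (∀ i j, i + 1 < j → j ≤ R.length → ¬ G.Adj (R.getVert i) (R.getVert j)) :=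
  exists_induced_walk_aux S p0.length p0 le_rfl h0

end SimpleGraph.Walk

namespace SimpleGraph

lemma adj_dist_one {x y : V} (h : G.Adj x y) : G.dist x y ≤ 1 := by
  simpa using SimpleGraph.dist_le (Walk.cons h Walk.nil)

lemma dist_le_adj (hG : G.Connected) {x y : V} (h : G.Adj x y) (z : V) :
    G.dist z x ≤ G.dist z y + 1 := by
  calc G.dist z x ≤ G.dist z y + G.dist y x := hG.dist_triangle
    _ ≤ G.dist z y + 1 := by
        have := adj_dist_one (G := G) h.symm; omega

lemma dist_start_getVert_le (hG : G.Connected) {a b : V} (p : G.Walk a b) (i : ℕ)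
    (hi : i ≤ p.length) : G.dist a (p.getVert i) ≤ i := by
  have h1 : p.reverse.getVert (p.length - i) = p.getVert i := by
    rw [Walk.getVert_reverse]
    congr 1
    omega
  have h2 := SimpleGraph.dist_le (p.reverse.drop (p.length - i))
  rw [Walk.length_drop', Walk.length_reverse, h1] at h2
  rw [dist_comm]
  omega

lemma shortest_getVert_dist (hG : G.Connected) {a b : V} (p : G.Walk a b)
    (hp : p.length = G.dist a b) (i : ℕ) (hi : i ≤ p.length) :
    G.dist a (p.getVert i) = i ∧ G.dist (p.getVert i) b = p.length - i := by
  have h1 := dist_start_getVert_le hG p i hi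
  have h2 := SimpleGraph.dist_le (p.drop i)
  rw [Walk.length_drop'] at h2
  have h3 : G.dist a b ≤ G.dist a (p.getVert i) + G.dist (p.getVert i) b := hG.dist_triangle
  omega

/-- On a shortest walk, distinct positions give distinct vertices, and the distance between
two positions is the difference. -/
lemma shortest_getVert_dist_between (hG : G.Connected) {a b : V} (p : G.Walk a b)
    (hp : p.length = G.dist a b) {i j : ℕ} (hij : i ≤ j) (hj : j ≤ p.length) :
    j - i ≤ G.dist (p.getVert i) (p.getVert j) := by
  have h1 := (shortest_getVert_dist hG p hp i (le_trans hij hj)).1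
  have h2 := (shortest_getVert_dist hG p hp j hj).1
  have h3 : G.dist a (p.getVert j) ≤ G.dist a (p.getVert i) + G.dist (p.getVert i) (p.getVert j) :=
    hG.dist_triangle
  omega

end SimpleGraph

section Cyc

lemma hasInducedCycle_of_fn {G : SimpleGraph V} {n : ℕ} (hn : 4 ≤ n) (c : ℕ → V)
    (hinj : ∀ s t, s < n → t < n → c s = c t → s = t)
    (hadj : ∀ s t, s < n → t < n →
      (G.Adj (c s) (c t) ↔ (s + 1 = t ∨ t + 1 = s ∨ (s = 0 ∧ t + 1 = n) ∨ (t = 0 ∧ s + 1 = n)))) :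
    HasInducedCycle G n := by
  haveI : NeZero n := ⟨by omega⟩
  have hone : (1 : ZMod n).val = 1 := ZMod.val_one_eq_one_mod n ▸ Nat.mod_eq_of_lt (by omega)
  have key : ∀ a b : ZMod n, a = b + 1 ↔ a.val = (b.val + 1) % n := by
    intro a b
    constructor
    · intro h; rw [h, ZMod.val_add, hone]
    · intro h
      apply ZMod.val_injective n
      rw [h, ZMod.val_add, hone]
  refine ⟨by omega, fun i => c i.val, ?_, ?_⟩
  · intro i j h
    exact ZMod.val_injective n (hinj _ _ (ZMod.val_lt i) (ZMod.val_lt j) h)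
  · intro i j
    have hi := ZMod.val_lt i
    have hj := ZMod.val_lt j
    rw [hadj _ _ hi hj, key, key]
    have h1 : (i.val + 1) % n = if i.val + 1 = n then 0 else i.val + 1 := by
      split_ifs with h
      · rw [h, Nat.mod_self]
      · exact Nat.mod_eq_of_lt (by omega)
    have h2 : (j.val + 1) % n = if j.val + 1 = n then 0 else j.val + 1 := by
      split_ifs with h
      · rw [h, Nat.mod_self]
      · exact Nat.mod_eq_of_lt (by omega)
    rw [h1, h2]
    split_ifs <;> omega

end Cyc

namespace SimpleGraph

lemma getVert_mem_support {u v : V} (p : G.Walk u v) (i : ℕ) (hi : i ≤ p.length) :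
    p.getVert i ∈ p.support :=
  Walk.mem_support_iff_exists_getVert.mpr ⟨i, rfl, hi⟩

lemma shortest_adj_iff (hG : G.Connected) {a b : V} (p : G.Walk a b)
    (hp : p.length = G.dist a b) {α β : ℕ} (hα : α ≤ p.length) (hβ : β ≤ p.length) :
    G.Adj (p.getVert α) (p.getVert β) ↔ (α + 1 = β ∨ β + 1 = α) := by
  constructor
  · intro h
    by_contra hc
    push_neg at hc
    have hd := adj_dist_one (G := G) h
    rcases le_total α β with hle | hle
    · have h1 := shortest_getVert_dist_between hG p hp hle hβ
      have hne : α ≠ β := by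
        intro hab; subst hab; exact h.ne rfl
      have : β - α ≥ 2 := by omega
      omega
    · have h1 := shortest_getVert_dist_between hG p hp hle hα
      rw [dist_comm] at h1
      have hne : α ≠ β := by
        intro hab; subst hab; exact h.ne rfl
      omega
  · rintro (h | h)
    · subst h; exact p.adj_getVert_succ (by omega)
    · subst h; exact (p.adj_getVert_succ (by omega)).symm

lemma support_of_shortest (hG : G.Connected) {z w : V} (P : G.Walk z w)
    (hP : P.length = G.dist z w) {y : V} (hy : y ∈ P.support) :
    G.dist z y ≤ P.length ∧ (G.dist z y = P.length → y = w) := by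
  obtain ⟨s, rfl, hs⟩ := Walk.mem_support_iff_exists_getVert.mp hy
  have h1 := (shortest_getVert_dist hG P hP s hs).1
  constructor
  · omega
  · intro h
    have : s = P.length := by omega
    subst this
    exact P.getVert_length

end SimpleGraph

namespace SimpleGraph

lemma ball_convex (hG : G.Connected) (hch : ∀ n, 3 < n → ¬ HasInducedCycle G n)
    {z u v : V} {k : ℕ} (hu : G.dist z u ≤ k) (hv : G.dist z v ≤ k)
    (p : G.Walk u v) (hp : p.length = G.dist u v) (t : ℕ) :
    G.dist z (p.getVert t) ≤ k := by
  by_contra hcon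
  push_neg at hcon
  rcases le_or_gt t p.length with ht | ht
  swap
  · rw [p.getVert_of_length_le ht.le] at hcon; omega
  set L := p.length with hL
  set D : ℕ → ℕ := fun s => G.dist z (p.getVert s) with hD
  have hstep : ∀ s, s + 1 ≤ L → D (s + 1) ≤ D s + 1 ∧ D s ≤ D (s + 1) + 1 := by
    intro s hs
    have h := p.adj_getVert_succ (i := s) (by omega)
    exact ⟨dist_le_adj hG h.symm z, dist_le_adj hG h z⟩
  -- the maximum level M of D on [0, L], attained at i0
  obtain ⟨M, i0, hi0L, hi0, hsup⟩ :
      ∃ M i0, i0 ≤ L ∧ D i0 = M ∧ ∀ s, s ≤ L → D s ≤ M := by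
    obtain ⟨i0, hmem, heq⟩ := Finset.exists_mem_eq_sup (Finset.range (L + 1))
      (by simp) D
    rw [Finset.mem_range] at hmem
    exact ⟨_, i0, by omega, heq.symm,
      fun s hs => Finset.le_sup (Finset.mem_range.mpr (by omega))⟩
  have hD0 : D 0 ≤ k := by simpa [hD, p.getVert_zero] using hu
  have hDL : D L ≤ k := by simpa [hD, hL, p.getVert_length] using hv
  have hMk : k < M := lt_of_lt_of_le hcon (hsup t ht)
  -- the run boundaries a < i0 < b
  classical
  obtain ⟨a, hai0, haLt, haMax⟩ :
      ∃ a, a ≤ i0 ∧ D a < M ∧ ∀ s, s ≤ i0 → D s < M → s ≤ a := by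
    refine ⟨Nat.findGreatest (fun s => D s < M) i0, Nat.findGreatest_le i0, ?_, ?_⟩
    · exact Nat.findGreatest_spec (P := fun s => D s < M) (Nat.zero_le i0) (show D 0 < M by omega)
    · intro s hs hlt
      exact Nat.le_findGreatest hs hlt
  obtain ⟨b, hi0b, hbL, hbLt, hbMin⟩ :
      ∃ b, i0 ≤ b ∧ b ≤ L ∧ D b < M ∧ ∀ s, i0 ≤ s → D s < M → b ≤ s := by
    have hex : ∃ s, i0 ≤ s ∧ D s < M := ⟨L, hi0L, show D L < M by omega⟩
    refine ⟨Nat.find hex, (Nat.find_spec hex).1, ?_, (Nat.find_spec hex).2, ?_⟩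
    · exact Nat.find_min' hex ⟨hi0L, show D L < M by omega⟩
    · intro s hs hlt
      exact Nat.find_min' hex ⟨hs, hlt⟩
  have hai0' : a < i0 := by
    rcases Nat.lt_or_ge a i0 with h | h
    · exact h
    · exfalso; have : a = i0 := by omega
      rw [this, hi0] at haLt; omega
  have hi0b' : i0 < b := by
    rcases Nat.lt_or_ge i0 b with h | h
    · exact h
    · exfalso; have : b = i0 := by omega
      rw [this, hi0] at hbLt; omega
  have hrun : ∀ s, a < s → s < b → D s = M := by
    intro s hs1 hs2
    rcases le_or_gt s i0 with hsi | hsi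
    · by_contra hne
      have := haMax s hsi (lt_of_le_of_ne (hsup s (by omega)) hne)
      omega
    · by_contra hne
      have := hbMin s (by omega) (lt_of_le_of_ne (hsup s (by omega)) hne)
      omega
  have haM : D a + 1 = M := by
    have h1 : D (a + 1) = M := hrun (a + 1) (by omega) (by omega)
    have h2 := (hstep a (by omega)).1
    omega
  have hbM : D b + 1 = M := by
    have h1 : D (b - 1) = M := hrun (b - 1) (by omega) (by omega)
    have h2 := (hstep (b - 1) (by omega)).2
    have hb1 : b - 1 + 1 = b := by omega
    rw [hb1] at h2
    omega
  -- abbreviations for endpoints of the run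
  have hab2 : a + 2 ≤ b := by omega
  -- shortest walks from z to the boundary vertices
  obtain ⟨P, hP⟩ := hG.exists_walk_length_eq_dist z (p.getVert a)
  obtain ⟨Q, hQ⟩ := hG.exists_walk_length_eq_dist z (p.getVert b)
  have hPl : P.length = D a := hP
  have hQl : Q.length = D b := hQ
  set S : Set V := {y | y ∈ P.support ∨ y ∈ Q.support} with hS
  have hSd : ∀ y ∈ S, G.dist z y ≤ D a := by
    rintro y (hy | hy)
    · have := (support_of_shortest hG P hP hy).1; omega
    · have := (support_of_shortest hG Q hQ hy).1; omega
  have hSe : ∀ y ∈ S, G.dist z y = D a → y = p.getVert a ∨ y = p.getVert b := by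
    rintro y (hy | hy) hd
    · exact Or.inl ((support_of_shortest hG P hP hy).2 (by omega))
    · exact Or.inr ((support_of_shortest hG Q hQ hy).2 (by omega))
  have hW0 : ∀ x ∈ (P.reverse.append Q).support, x ∈ S := by
    intro x hx
    rcases (Walk.mem_support_append_iff _ _).mp hx with hx | hx
    · left; rwa [Walk.support_reverse, List.mem_reverse] at hx
    · right; exact hx
  obtain ⟨R, hRS, hRinj, hRadj⟩ := Walk.exists_induced_walk S (P.reverse.append Q) hW0
  set m := R.length with hm
  have hR0 : R.getVert 0 = p.getVert a := R.getVert_zero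
  have hRm : R.getVert m = p.getVert b := R.getVert_length
  -- facts about `p` positions
  have hp' : p.length = G.dist u v := hp
  have hpinj : ∀ α β, α ≤ L → β ≤ L → p.getVert α = p.getVert β → α = β := by
    intro α β hα hβ he
    have h1 := (shortest_getVert_dist hG p hp' α hα).1
    have h2 := (shortest_getVert_dist hG p hp' β hβ).1
    rw [he] at h1
    omega
  have hpadj : ∀ α β, α ≤ L → β ≤ L →
      (G.Adj (p.getVert α) (p.getVert β) ↔ (α + 1 = β ∨ β + 1 = α)) :=
    fun α β hα hβ => shortest_adj_iff hG p hp' hα hβ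
  have hdistab : 2 ≤ G.dist (p.getVert a) (p.getVert b) := by
    have := shortest_getVert_dist_between hG p hp' (show a ≤ b by omega) hbL
    omega
  have hne_ab : p.getVert a ≠ p.getVert b := by
    intro h
    have := hpinj a b (by omega) (by omega) h
    omega
  have hm2 : 2 ≤ m := by
    rcases Nat.lt_or_ge m 2 with h | h
    swap
    · exact h
    exfalso
    rcases (show m = 0 ∨ m = 1 by omega) with h0 | h1
    · rw [h0] at hRm
      exact hne_ab (hR0.symm.trans hRm)
    · rw [h1] at hRm
      have hA := R.adj_getVert_succ (i := 0) (by omega)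
      rw [hR0, zero_add, hRm] at hA
      have := adj_dist_one (G := G) hA
      omega
  -- distance bound for R vertices
  have hRv : ∀ s, s ≤ m → G.dist z (R.getVert s) ≤ D a := fun s hs =>
    hSd _ (hRS _ (getVert_mem_support R s hs))
  -- the cycle
  set n := m + (b - a) with hn
  have hn4 : 4 ≤ n := by omega
  set c : ℕ → V := fun s => if s ≤ m then R.getVert s else p.getVert (b + m - s) with hc
  have hcR : ∀ s, s ≤ m → c s = R.getVert s := by
    intro s hs; simp only [hc, if_pos hs]
  have hcP : ∀ s, m < s → c s = p.getVert (b + m - s) := by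
    intro s hs
    simp only [hc]
    rw [if_neg (show ¬ s ≤ m by omega)]
  -- run vertices have distance M
  have hrunD : ∀ s, m < s → s < n → G.dist z (c s) = M := by
    intro s hs1 hs2
    rw [hcP s hs1]
    exact hrun (b + m - s) (by omega) (by omega)
  -- injectivity
  have hinj : ∀ s t, s < n → t < n → c s = c t → s = t := by
    intro s t hsn htn he
    rcases le_or_gt s m with hs | hs <;> rcases le_or_gt t m with ht | ht
    · rw [hcR s hs, hcR t ht] at he
      rcases lt_trichotomy s t with h | h | h
      · exact absurd he (hRinj s t h ht)
      · exact h
      · exact absurd he.symm (hRinj t s h hs)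
    · exfalso
      have h1 := hRv s hs
      have h2 := hrunD t ht htn
      rw [hcR s hs] at he
      rw [← he] at h2
      omega
    · exfalso
      have h1 := hRv t ht
      have h2 := hrunD s hs hsn
      rw [hcR t ht] at he
      rw [he] at h2
      omega
    · rw [hcP s hs, hcP t ht] at he
      have := hpinj (b + m - s) (b + m - t) (by omega) (by omega) he
      omega
  -- adjacency, for s ≤ t
  have hmain : ∀ s t, s ≤ t → t < n →
      (G.Adj (c s) (c t) ↔
        (s + 1 = t ∨ t + 1 = s ∨ (s = 0 ∧ t + 1 = n) ∨ (t = 0 ∧ s + 1 = n))) := by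
    intro s t hst htn
    have hsn : s < n := by omega
    rcases le_or_gt t m with ht | ht
    · -- both on R
      have hs : s ≤ m := le_trans hst ht
      rw [hcR s hs, hcR t ht]
      constructor
      · intro hA
        have : s + 1 = t := by
          rcases Nat.lt_or_ge (s + 1) t with h | h
          · exact absurd hA (hRadj s t h ht)
          · have hne : s ≠ t := fun h' => hA.ne (by rw [h'])
            omega
        omega
      · intro hrhs
        have hst1 : s + 1 = t := by omega
        subst hst1
        exact R.adj_getVert_succ (by omega)
    · rcases le_or_gt s m with hs | hs
      · -- s on R, t on the run
        rw [hcR s hs, hcP t ht]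
        have hβ : a + 1 ≤ b + m - t ∧ b + m - t ≤ b - 1 := by omega
        have hDt : G.dist z (p.getVert (b + m - t)) = M :=
          hrun (b + m - t) (by omega) (by omega)
        constructor
        · intro hA
          have h1 : G.dist z (R.getVert s) = D a := by
            have h2 : G.dist z (p.getVert (b + m - t)) ≤ G.dist z (R.getVert s) + 1 :=
              dist_le_adj hG hA.symm z
            have h3 := hRv s hs
            omega
          rcases hSe _ (hRS _ (getVert_mem_support R s hs)) h1 with he | he
          · -- R.getVert s = p.getVert a, so s = 0
            have hs0 : s = 0 := by
              by_contra h
              exact hRinj 0 s (by omega) hs (hR0.trans he.symm)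
            rw [he] at hA
            rcases (hpadj a (b + m - t) (by omega) (by omega)).mp hA with h | h
            · right; right; left; exact ⟨hs0, by omega⟩
            · omega
          · -- R.getVert s = p.getVert b, so s = m
            have hsm : s = m := by
              by_contra h
              exact hRinj s m (by omega) le_rfl (he.trans hRm.symm)
            rw [he] at hA
            rcases (hpadj b (b + m - t) (by omega) (by omega)).mp hA with h | h
            · omega
            · left; omega
        · intro hrhs
          rcases hrhs with h | h | h | h
          · -- s = m, t = m + 1
            have hsm : s = m := by omega
            rw [hsm, hRm]
            rw [show b + m - t = b - 1 by omega]
            exact (hpadj b (b - 1) (by omega) (by omega)).mpr (Or.inr (by omega))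
          · omega
          · -- s = 0, t = n - 1
            rw [h.1, hR0]
            rw [show b + m - t = a + 1 by omega]
            exact (hpadj a (a + 1) (by omega) (by omega)).mpr (Or.inl rfl)
          · omega
      · -- both on the run
        rw [hcP s hs, hcP t ht]
        rw [hpadj (b + m - s) (b + m - t) (by omega) (by omega)]
        omega
  have hadjFull : ∀ s t, s < n → t < n →
      (G.Adj (c s) (c t) ↔
        (s + 1 = t ∨ t + 1 = s ∨ (s = 0 ∧ t + 1 = n) ∨ (t = 0 ∧ s + 1 = n))) := by
    intro s t hsn htn
    rcases le_total s t with h | h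
    · exact hmain s t h htn
    · rw [adj_comm, hmain t s h hsn]
      constructor <;> intro h' <;> omega
  exact hch n (by omega) (hasInducedCycle_of_fn hn4 c hinj hadjFull)

end SimpleGraph

namespace SimpleGraph

lemma reach_in_induce (G : SimpleGraph V) (s : Set V) {x y : V} (p : G.Walk x y)
    (hsup : ∀ w ∈ p.support, w ∈ s) :
    ∃ (hx : x ∈ s) (hy : y ∈ s), (G.induce s).Reachable ⟨x, hx⟩ ⟨y, hy⟩ := by
  induction p with
  | nil =>
    exact ⟨hsup _ (Walk.start_mem_support _), hsup _ (Walk.start_mem_support _),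
      Reachable.refl _⟩
  | @cons x b y h q ih =>
    obtain ⟨hb, hy, hr⟩ := ih (fun w hw => hsup w (by simp [hw]))
    have hx : x ∈ s := hsup x (Walk.start_mem_support _)
    have hadj : (G.induce s).Adj ⟨x, hx⟩ ⟨b, hb⟩ := by simpa using h
    exact ⟨hx, hy, hadj.reachable.trans hr⟩

end SimpleGraph

theorem center_connected [Fintype V] (G : SimpleGraph V) (hG : G.Connected)
    (hch : KChordal G 3) : (G.induce (_root_.center G)).Connected := by
  have hch' : ∀ n, 3 < n → ¬ HasInducedCycle G n := hch
  haveI : Nonempty V := hG.nonempty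
  obtain ⟨x0, hx0⟩ : ∃ x, ecc G x = grad G := Nat.sInf_mem (Set.range_nonempty (ecc G))
  have hkey : ∀ (x y : V), x ∈ _root_.center G → y ∈ _root_.center G →
      ∀ (p : G.Walk x y), p.length = G.dist x y → ∀ w ∈ p.support, w ∈ _root_.center G := by
    intro x y hx hy p hp w hw
    obtain ⟨i, rfl, hi⟩ := Walk.mem_support_iff_exists_getVert.mp hw
    have hecc_le : ecc G (p.getVert i) ≤ grad G := by
      apply Finset.sup_le
      intro zz _
      rw [SimpleGraph.dist_comm]
      refine SimpleGraph.ball_convex hG hch' ?_ ?_ p hp i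
      · rw [SimpleGraph.dist_comm]
        calc G.dist x zz ≤ ecc G x := Finset.le_sup (Finset.mem_univ zz)
          _ = grad G := hx
      · rw [SimpleGraph.dist_comm]
        calc G.dist y zz ≤ ecc G y := Finset.le_sup (Finset.mem_univ zz)
          _ = grad G := hy
    exact le_antisymm hecc_le (Nat.sInf_le ⟨p.getVert i, rfl⟩)
  rw [connected_iff]
  constructor
  · rintro ⟨x, hx⟩ ⟨y, hy⟩
    obtain ⟨p, hp⟩ := hG.exists_walk_length_eq_dist x y
    obtain ⟨hx', hy', hr⟩ := SimpleGraph.reach_in_induce G (_root_.center G) p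
      (hkey x y hx hy p hp)
    exact hr
  · exact ⟨⟨x0, hx0⟩⟩
end

section
/- Every minimal separator of a chordal graph is a clique. -/
open SimpleGraph

variable {V : Type*}

/-- `S` separates `G`: two vertices outside `S` are not connected in `G - S`. -/
def IsSeparator (G : SimpleGraph V) (S : Set V) : Prop :=
  ∃ (a b : V) (ha : a ∉ S) (hb : b ∉ S), ¬ (G.induce Sᶜ).Reachable ⟨a, ha⟩ ⟨b, hb⟩

namespace ChordalAux

open SimpleGraph

variable {V : Type*} (G : SimpleGraph V)

/-- The restriction of `G` to a vertex set `s` (as a graph on all of `V`). -/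
def Gr (s : Set V) : SimpleGraph V where
  Adj u v := G.Adj u v ∧ u ∈ s ∧ v ∈ s
  symm := ⟨by rintro u v ⟨h, hu, hv⟩; exact ⟨h.symm, hv, hu⟩⟩
  loopless := ⟨by rintro u ⟨h, _⟩; exact G.loopless.irrefl u h⟩

variable {G}

lemma gr_adj {s : Set V} {u v : V} :
    (Gr G s).Adj u v ↔ G.Adj u v ∧ u ∈ s ∧ v ∈ s := Iff.rfl

lemma gr_le (s : Set V) : Gr G s ≤ G := fun _ _ h => (gr_adj.mp h).1

lemma gr_reach_of_walk {H : SimpleGraph V} (hle : H ≤ G) {s : Set V} {u v : V}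
    (w : H.Walk u v) (hsup : ∀ t ∈ w.support, t ∈ s) : (Gr G s).Reachable u v := by
  induction w with
  | nil => exact Reachable.refl _
  | @cons a b c h p ih =>
    have h1 : a ∈ s := hsup a (by simp)
    have h2 : b ∈ s := hsup b (by simp)
    have hadj : (Gr G s).Adj a b := gr_adj.mpr ⟨hle h, h1, h2⟩
    exact (SimpleGraph.Adj.reachable hadj).trans
      (ih (fun t ht => hsup t (by simp [ht])))

lemma gr_support_mem {s : Set V} {u v : V} (w : (Gr G s).Walk u v) {t : V}
    (ht : t ∈ w.support) : t = v ∨ t ∈ s := by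
  induction w with
  | nil => simp at ht; exact Or.inl ht
  | @cons a b c h p ih =>
    simp only [SimpleGraph.Walk.support_cons, List.mem_cons] at ht
    rcases ht with rfl | ht
    · exact Or.inr (gr_adj.mp h).2.1
    · exact ih ht

lemma gr_reachable_mem {s : Set V} {u v : V} (h : (Gr G s).Reachable u v) (hv : v ∈ s) :
    u ∈ s := by
  obtain ⟨w⟩ := h
  rcases gr_support_mem w w.start_mem_support with rfl | h'
  · exact hv
  · exact h'

lemma induce_reachable_of_gr_walk {s : Set V} :
    ∀ {u v : V} (_ : (Gr G s).Walk u v) (hu : u ∈ s) (hv : v ∈ s),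
      (G.induce s).Reachable ⟨u, hu⟩ ⟨v, hv⟩
  | _, _, SimpleGraph.Walk.nil, _, _ => Reachable.refl _
  | _, _, SimpleGraph.Walk.cons h p, hu, hv =>
      (SimpleGraph.Adj.reachable
        (show (G.induce s).Adj ⟨_, hu⟩ ⟨_, (gr_adj.mp h).2.2⟩ from (gr_adj.mp h).1)).trans
        (induce_reachable_of_gr_walk p (gr_adj.mp h).2.2 hv)

lemma reachable_induce_iff {s : Set V} {u v : V} (hu : u ∈ s) (hv : v ∈ s) :
    (G.induce s).Reachable ⟨u, hu⟩ ⟨v, hv⟩ ↔ (Gr G s).Reachable u v := by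
  constructor
  · rintro ⟨w⟩
    exact ⟨w.map ⟨Subtype.val, fun {a b} hab => gr_adj.mpr ⟨hab, a.2, b.2⟩⟩⟩
  · rintro ⟨w⟩
    exact induce_reachable_of_gr_walk w hu hv

lemma isSeparator_iff {S : Set V} :
    IsSeparator G S ↔ ∃ a b : V, a ∉ S ∧ b ∉ S ∧ ¬ (Gr G Sᶜ).Reachable a b := by
  constructor
  · rintro ⟨a, b, ha, hb, h⟩
    exact ⟨a, b, ha, hb, fun hr =>
      h ((reachable_induce_iff (G := G) (s := Sᶜ) (u := a) (v := b) ha hb).mpr hr)⟩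
  · rintro ⟨a, b, ha, hb, h⟩
    exact ⟨a, b, ha, hb, fun hr =>
      h ((reachable_induce_iff (G := G) (s := Sᶜ) (u := a) (v := b) ha hb).mp hr)⟩

lemma exists_walk_to_getVert {H : SimpleGraph V} :
    ∀ {u v : V} (p : H.Walk u v) (i : ℕ), ∃ q : H.Walk u (p.getVert i), q.length ≤ i := by
  intro u v p
  induction p with
  | nil => intro i; exact ⟨SimpleGraph.Walk.nil.copy rfl rfl, by simp⟩
  | @cons a b c h p ih =>
    intro i
    cases i with
    | zero => exact ⟨SimpleGraph.Walk.nil.copy rfl (by simp), by simp⟩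
    | succ n =>
      obtain ⟨q, hq⟩ := ih n
      exact ⟨(q.cons h).copy rfl (by rw [SimpleGraph.Walk.getVert_cons_succ]), by
        simp only [SimpleGraph.Walk.length_copy, SimpleGraph.Walk.length_cons]; omega⟩

lemma exists_walk_from_getVert {H : SimpleGraph V} :
    ∀ {u v : V} (p : H.Walk u v) (i : ℕ),
      ∃ q : H.Walk (p.getVert i) v, q.length ≤ p.length - i := by
  intro u v p
  induction p with
  | nil => intro i; exact ⟨SimpleGraph.Walk.nil.copy rfl rfl, by simp⟩
  | @cons a b c h p ih =>
    intro i
    cases i with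
    | zero =>
      exact ⟨(p.cons h).copy (by simp) rfl, by simp⟩
    | succ n =>
      obtain ⟨q, hq⟩ := ih n
      refine ⟨q.copy (by rw [SimpleGraph.Walk.getVert_cons_succ]) rfl, ?_⟩
      simp only [SimpleGraph.Walk.length_copy, SimpleGraph.Walk.length_cons]
      omega

lemma geodesic_adj {H : SimpleGraph V} {u v : V} {p : H.Walk u v}
    (hp : p.length = H.dist u v) {i j : ℕ} (hij : i < j) (hj : j ≤ p.length)
    (ha : H.Adj (p.getVert i) (p.getVert j)) : j = i + 1 := by
  obtain ⟨q1, hq1⟩ := exists_walk_to_getVert p i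
  obtain ⟨q2, hq2⟩ := exists_walk_from_getVert p j
  have hd := SimpleGraph.dist_le (q1.append (SimpleGraph.Walk.cons ha q2))
  rw [SimpleGraph.Walk.length_append, SimpleGraph.Walk.length_cons] at hd
  omega

lemma path_getVert_ne {H : SimpleGraph V} :
    ∀ {u v : V} (p : H.Walk u v), p.IsPath → ∀ {i j : ℕ}, i < j → j ≤ p.length →
      p.getVert i ≠ p.getVert j := by
  intro u v p
  induction p with
  | nil => intro _ i j hij hj; simp at hj; omega
  | @cons a b c h p ih =>
    intro hp i j hij hj
    rw [SimpleGraph.Walk.cons_isPath_iff] at hp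
    cases i with
    | zero =>
      have hj' : j - 1 ≤ p.length := by
        simp only [SimpleGraph.Walk.length_cons] at hj; omega
      have hmem : p.getVert (j - 1) ∈ p.support :=
        SimpleGraph.Walk.mem_support_iff_exists_getVert.mpr ⟨j - 1, rfl, hj'⟩
      have hjj : j = (j - 1) + 1 := by omega
      rw [SimpleGraph.Walk.getVert_zero, hjj, SimpleGraph.Walk.getVert_cons_succ]
      intro he
      exact hp.2 (he ▸ hmem)
    | succ n =>
      have hjj : j = (j - 1) + 1 := by omega
      rw [SimpleGraph.Walk.getVert_cons_succ, hjj, SimpleGraph.Walk.getVert_cons_succ]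
      refine ih hp.1 (by omega) ?_
      simp only [SimpleGraph.Walk.length_cons] at hj; omega

lemma exists_adj_reach {H : SimpleGraph V} (hle : H ≤ G) {S : Set V} {s c d : V}
    (hnr : ¬ (Gr G Sᶜ).Reachable c d) (hsc : s ≠ c) (w : H.Walk c d)
    (hw : ∀ t ∈ w.support, t ∈ Sᶜ ∪ {s}) :
    ∃ x, G.Adj s x ∧ (Gr G Sᶜ).Reachable x c := by
  classical
  by_cases hs : s ∈ w.support
  · set p := (w.takeUntil s hs).reverse with hp
    have hsub : ∀ t ∈ p.support, t ∈ w.support := by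
      intro t ht
      rw [hp, SimpleGraph.Walk.support_reverse, List.mem_reverse] at ht
      exact w.support_takeUntil_subset hs ht
    have hcount : p.support.count s = 1 := by
      rw [hp, SimpleGraph.Walk.support_reverse, List.count_reverse]
      exact w.count_support_takeUntil_eq_one hs
    have hnnil : ¬ p.Nil := by
      intro h
      rw [SimpleGraph.Walk.nil_iff_length_eq] at h
      exact hsc (SimpleGraph.Walk.eq_of_length_eq_zero h)
    have hadj : H.Adj s (p.getVert 1) := p.adj_snd hnnil
    have hsupq : p.support = s :: p.tail.support := (p.cons_support_tail hnnil).symm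
    have hsq : s ∉ p.tail.support := by
      rw [hsupq, List.count_cons_self] at hcount
      have : p.tail.support.count s = 0 := by omega
      exact List.count_eq_zero.mp this
    have hq : ∀ t ∈ p.tail.support, t ∈ Sᶜ := by
      intro t ht
      have h1 := hw t (hsub t (by rw [hsupq]; exact List.mem_cons_of_mem _ ht))
      rcases h1 with h1 | h1
      · exact h1
      · exact absurd (Set.mem_singleton_iff.mp h1 ▸ ht) hsq
    exact ⟨p.getVert 1, hle hadj, gr_reach_of_walk hle p.tail hq⟩
  · exact absurd (gr_reach_of_walk hle w (fun t ht =>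
      Or.resolve_right (hw t ht) (fun h' => hs (Set.mem_singleton_iff.mp h' ▸ ht)))) hnr

lemma mod_succ_cases {n v : ℕ} (hv : v < n) :
    (v + 1) % n = if v + 1 = n then 0 else v + 1 := by
  split
  · next h => rw [h, Nat.mod_self]
  · next h => exact Nat.mod_eq_of_lt (by omega)

end ChordalAux

open ChordalAux

theorem minimal_separator_is_clique [Fintype V] (G : SimpleGraph V) (hch : KChordal G 3)
    (S : Set V) (hS : IsSeparator G S) (hmin : ∀ T ⊂ S, ¬ IsSeparator G T) :
    G.IsClique S := by
  classical
  intro x hxS y hyS hne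
  by_contra hxy
  obtain ⟨a, b, ha, hb, hnr⟩ := isSeparator_iff.mp hS
  set R := Gr G Sᶜ with hR
  set A := {v : V | R.Reachable v a} with hA
  set B := {v : V | R.Reachable v b} with hB
  have haSc : a ∈ Sᶜ := ha
  have hbSc : b ∈ Sᶜ := hb
  have hAsub : A ⊆ Sᶜ := fun v hv => gr_reachable_mem hv haSc
  have hBsub : B ⊆ Sᶜ := fun v hv => gr_reachable_mem hv hbSc
  have hABdisj : ∀ t, t ∈ A → t ∈ B → False := fun t h1 h2 => hnr (h1.symm.trans h2)
  have hAB : ∀ u ∈ A, ∀ v ∈ B, ¬ G.Adj u v := by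
    intro u hu v hv hadj
    exact hnr (hu.symm.trans ((SimpleGraph.Adj.reachable
      (show R.Adj u v from gr_adj.mpr ⟨hadj, hAsub hu, hBsub hv⟩)).trans hv))
  -- every vertex of S has neighbors in both A and B
  have key : ∀ s ∈ S, (∃ xa ∈ A, G.Adj s xa) ∧ (∃ xb ∈ B, G.Adj s xb) := by
    intro s hsS
    have hns := hmin _ (Set.sdiff_singleton_ssubset.mpr hsS)
    rw [isSeparator_iff] at hns
    push_neg at hns
    have hreach := hns a b (fun h => ha h.1) (fun h => hb h.1)
    obtain ⟨w0⟩ := hreach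
    have hsub : ∀ t ∈ w0.support, t ∈ Sᶜ ∪ {s} := by
      intro t ht
      rcases gr_support_mem w0 ht with rfl | h
      · exact Or.inl hb
      · by_cases hts : t = s
        · exact Or.inr hts
        · exact Or.inl (fun htS => h ⟨htS, hts⟩)
    have hsa : s ≠ a := fun h => ha (h ▸ hsS)
    have hsb : s ≠ b := fun h => hb (h ▸ hsS)
    obtain ⟨xa, hadja, hrxa⟩ := exists_adj_reach (gr_le _) hnr hsa w0 hsub
    obtain ⟨xb, hadjb, hrxb⟩ := exists_adj_reach (gr_le _) (fun h => hnr h.symm) hsb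
      w0.reverse (by
        intro t ht
        rw [SimpleGraph.Walk.support_reverse, List.mem_reverse] at ht
        exact hsub t ht)
    exact ⟨⟨xa, hrxa, hadja⟩, ⟨xb, hrxb, hadjb⟩⟩
  obtain ⟨⟨ax, haxA, haxadj⟩, -⟩ := key x hxS
  obtain ⟨⟨ay, hayA, hayadj⟩, -⟩ := key y hyS
  obtain ⟨-, ⟨bx, hbxB, hbxadj⟩⟩ := key x hxS
  obtain ⟨-, ⟨by', hbyB, hbyadj⟩⟩ := key y hyS
  set VA := A ∪ {x, y} with hVA
  set VB := B ∪ {x, y} with hVB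
  set GA := Gr G VA with hGA
  set GB := Gr G VB with hGB
  have hxVA : x ∈ VA := Or.inr (Or.inl rfl)
  have hyVA : y ∈ VA := Or.inr (Or.inr rfl)
  have hxVB : x ∈ VB := Or.inr (Or.inl rfl)
  have hyVB : y ∈ VB := Or.inr (Or.inr rfl)
  -- reachability in GA
  have hmidA : ∀ u ∈ A, ∀ v ∈ A, GA.Reachable u v := by
    intro u hu v hv
    obtain ⟨w⟩ := (hu.trans (hv.symm : R.Reachable a v) : R.Reachable u v)
    refine gr_reach_of_walk (gr_le _) w ?_
    intro t ht
    exact Or.inl (Reachable.trans (⟨w.dropUntil t ht⟩ : R.Reachable t v) hv)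
  have hmidB : ∀ u ∈ B, ∀ v ∈ B, GB.Reachable u v := by
    intro u hu v hv
    obtain ⟨w⟩ := (hu.trans (hv.symm : R.Reachable b v) : R.Reachable u v)
    refine gr_reach_of_walk (gr_le _) w ?_
    intro t ht
    exact Or.inl (Reachable.trans (⟨w.dropUntil t ht⟩ : R.Reachable t v) hv)
  have hreachA : GA.Reachable x y :=
    ((SimpleGraph.Adj.reachable (show GA.Adj x ax from
        gr_adj.mpr ⟨haxadj, hxVA, Or.inl haxA⟩)).trans (hmidA ax haxA ay hayA)).trans
      (SimpleGraph.Adj.reachable (show GA.Adj ay y from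
        gr_adj.mpr ⟨hayadj.symm, Or.inl hayA, hyVA⟩))
  have hreachB : GB.Reachable x y :=
    ((SimpleGraph.Adj.reachable (show GB.Adj x bx from
        gr_adj.mpr ⟨hbxadj, hxVB, Or.inl hbxB⟩)).trans (hmidB bx hbxB by' hbyB)).trans
      (SimpleGraph.Adj.reachable (show GB.Adj by' y from
        gr_adj.mpr ⟨hbyadj.symm, Or.inl hbyB, hyVB⟩))
  -- shortest paths
  obtain ⟨P0, hP0⟩ := hreachA.exists_walk_length_eq_dist
  obtain ⟨Q0, hQ0⟩ := hreachB.exists_walk_length_eq_dist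
  set P := P0.bypass with hPdef
  set Q := Q0.bypass with hQdef
  have hPpath : P.IsPath := P0.bypass_isPath
  have hQpath : Q.IsPath := Q0.bypass_isPath
  have hPdist : P.length = GA.dist x y :=
    le_antisymm (hP0 ▸ P0.length_bypass_le) (SimpleGraph.dist_le P)
  have hQdist : Q.length = GB.dist x y :=
    le_antisymm (hQ0 ▸ Q0.length_bypass_le) (SimpleGraph.dist_le Q)
  have hPl2 : 2 ≤ P.length := by
    by_contra h
    push_neg at h
    rcases (show P.length = 0 ∨ P.length = 1 by omega) with hPL | hPL
    · exact hne (SimpleGraph.Walk.eq_of_length_eq_zero hPL)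
    · have := P.adj_getVert_succ (i := 0) (by omega)
      rw [SimpleGraph.Walk.getVert_zero] at this
      have h1 : P.getVert 1 = y := by
        have := P.getVert_length
        rwa [hPL] at this
      rw [h1] at this
      exact hxy (gr_adj.mp this).1
  have hQl2 : 2 ≤ Q.length := by
    by_contra h
    push_neg at h
    rcases (show Q.length = 0 ∨ Q.length = 1 by omega) with hQL | hQL
    · exact hne (SimpleGraph.Walk.eq_of_length_eq_zero hQL)
    · have := Q.adj_getVert_succ (i := 0) (by omega)
      rw [SimpleGraph.Walk.getVert_zero] at this
      have h1 : Q.getVert 1 = y := by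
        have := Q.getVert_length
        rwa [hQL] at this
      rw [h1] at this
      exact hxy (gr_adj.mp this).1
  -- memberships along the paths
  have hPmem : ∀ k, k ≤ P.length → P.getVert k ∈ VA := by
    intro k hk
    cases k with
    | zero => rw [SimpleGraph.Walk.getVert_zero]; exact hxVA
    | succ m => exact (gr_adj.mp (P.adj_getVert_succ (by omega))).2.2
  have hQmem : ∀ k, k ≤ Q.length → Q.getVert k ∈ VB := by
    intro k hk
    cases k with
    | zero => rw [SimpleGraph.Walk.getVert_zero]; exact hxVB
    | succ m => exact (gr_adj.mp (Q.adj_getVert_succ (by omega))).2.2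
  have hPint : ∀ k, 0 < k → k < P.length → P.getVert k ∈ A := by
    intro k h1 h2
    rcases hPmem k h2.le with h | h
    · exact h
    · exfalso
      rcases h with h | h
      · exact path_getVert_ne P hPpath h1 h2.le (by
          rw [SimpleGraph.Walk.getVert_zero, h])
      · exact path_getVert_ne P hPpath h2 le_rfl (by
          rw [SimpleGraph.Walk.getVert_length, h])
  have hQint : ∀ k, 0 < k → k < Q.length → Q.getVert k ∈ B := by
    intro k h1 h2
    rcases hQmem k h2.le with h | h
    · exact h
    · exfalso
      rcases h with h | h
      · exact path_getVert_ne Q hQpath h1 h2.le (by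
          rw [SimpleGraph.Walk.getVert_zero, h])
      · exact path_getVert_ne Q hQpath h2 le_rfl (by
          rw [SimpleGraph.Walk.getVert_length, h])
  set n := P.length + Q.length with hn
  set c : ℕ → V := fun t => if t ≤ P.length then P.getVert t else Q.getVert (n - t) with hc
  have hc0 : c 0 = x := by simp [hc, SimpleGraph.Walk.getVert_zero]
  have hcP : ∀ t, t ≤ P.length → c t = P.getVert t := by
    intro t ht; simp [hc, ht]
  have hcQ : ∀ t, P.length ≤ t → t ≤ n → c t = Q.getVert (n - t) := by
    intro t h1 h2
    by_cases h : t ≤ P.length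
    · have ht : t = P.length := le_antisymm h h1
      have h3 : n - t = Q.length := by omega
      rw [hcP t h, h3, SimpleGraph.Walk.getVert_length, ht,
        SimpleGraph.Walk.getVert_length]
    · simp [hc, h]
  have hcA : ∀ t, 0 < t → t < P.length → c t ∈ A := by
    intro t h1 h2; rw [hcP t h2.le]; exact hPint t h1 h2
  have hcB : ∀ t, P.length < t → t < n → c t ∈ B := by
    intro t h1 h2
    rw [hcQ t h1.le h2.le]
    exact hQint (n - t) (by omega) (by omega)
  have hxA : x ∉ A := fun h => (hAsub h) hxS
  have hxB : x ∉ B := fun h => (hBsub h) hxS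
  have hyA : y ∉ A := fun h => (hAsub h) hyS
  have hyB : y ∉ B := fun h => (hBsub h) hyS
  -- injectivity of c on [0, n)
  have hcinj : ∀ u v, u < v → v < n → c u ≠ c v := by
    intro u v huv hvn he
    by_cases hv : v ≤ P.length
    · rw [hcP u (by omega), hcP v hv] at he
      exact path_getVert_ne P hPpath huv hv he
    · push_neg at hv
      by_cases hu : P.length ≤ u
      · rw [hcQ u hu (by omega), hcQ v (by omega) (by omega)] at he
        exact path_getVert_ne Q hQpath (show n - v < n - u by omega)
          (show n - u ≤ Q.length by omega) he.symm
      · push_neg at hu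
        have hB' := hcB v hv hvn
        rcases Nat.eq_zero_or_pos u with rfl | hupos
        · rw [hc0] at he
          exact hxB (he ▸ hB')
        · exact hABdisj _ (hcA u hupos hu) (he ▸ hB')
  -- geodesic chord conditions
  have hadjA : ∀ i j, i < j → j ≤ P.length → G.Adj (P.getVert i) (P.getVert j) → j = i + 1 := by
    intro i j hij hj hadj
    exact geodesic_adj hPdist hij hj (gr_adj.mpr ⟨hadj, hPmem i (by omega), hPmem j hj⟩)
  have hadjB : ∀ i j, i < j → j ≤ Q.length → G.Adj (Q.getVert i) (Q.getVert j) → j = i + 1 := by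
    intro i j hij hj hadj
    exact geodesic_adj hQdist hij hj (gr_adj.mpr ⟨hadj, hQmem i (by omega), hQmem j hj⟩)
  have hconsA : ∀ i, i < P.length → G.Adj (P.getVert i) (P.getVert (i + 1)) :=
    fun i h => (gr_adj.mp (P.adj_getVert_succ h)).1
  have hconsB : ∀ i, i < Q.length → G.Adj (Q.getVert i) (Q.getVert (i + 1)) :=
    fun i h => (gr_adj.mp (Q.adj_getVert_succ h)).1
  -- the adjacency characterization
  have claim : ∀ u v, u < v → v < n →
      (G.Adj (c u) (c v) ↔ (v = u + 1 ∨ (u = 0 ∧ v = n - 1))) := by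
    intro u v huv hvn
    by_cases hv : v ≤ P.length
    · rw [hcP u (by omega), hcP v hv]
      constructor
      · intro h
        exact Or.inl (hadjA u v huv hv h)
      · rintro (rfl | ⟨rfl, rfl⟩)
        · exact hconsA u (by omega)
        · exact absurd hv (by omega)
    · push_neg at hv
      by_cases hu : P.length ≤ u
      · rw [hcQ u hu (by omega), hcQ v (by omega) (by omega)]
        constructor
        · intro h
          have := hadjB (n - v) (n - u) (by omega) (by omega) h.symm
          exact Or.inl (by omega)
        · rintro (rfl | ⟨rfl, rfl⟩)
          · have h' : n - u = (n - (u + 1)) + 1 := by omega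
            rw [h']
            exact (hconsB (n - (u + 1)) (by omega)).symm
          · exact absurd hu (by omega)
      · push_neg at hu
        rcases Nat.eq_zero_or_pos u with rfl | hupos
        · rw [hc0, hcQ v (by omega) (by omega)]
          constructor
          · intro h
            have hxq : Q.getVert 0 = x := Q.getVert_zero
            have := hadjB 0 (n - v) (by omega) (by omega) (by rwa [hxq])
            exact Or.inr ⟨rfl, by omega⟩
          · rintro (rfl | ⟨-, rfl⟩)
            · exact absurd hv (by omega)
            · have h1 : n - (n - 1) = 1 := by omega
              rw [h1]
              have := hconsB 0 (by omega)
              rwa [Q.getVert_zero] at this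
        · constructor
          · intro h
            exact absurd h (hAB _ (hcA u hupos hu) _ (hcB v hv hvn))
          · rintro (rfl | ⟨h0, -⟩)
            · omega
            · omega
  have hn4 : 4 ≤ n := by omega
  haveI : NeZero n := ⟨by omega⟩
  haveI : Fact (1 < n) := ⟨by omega⟩
  refine hch n (by omega) ⟨by omega, fun i => c i.val, ?_, ?_⟩
  · intro i j hij
    by_contra hne'
    have hvi := ZMod.val_lt i
    have hvj := ZMod.val_lt j
    have hvne : i.val ≠ j.val := fun h => hne' (ZMod.val_injective n h)
    rcases lt_or_gt_of_ne hvne with h | h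
    · exact hcinj _ _ h hvj hij
    · exact hcinj _ _ h hvi hij.symm
  · intro i j
    show G.Adj (c i.val) (c j.val) ↔ (i = j + 1 ∨ j = i + 1)
    have hvi := ZMod.val_lt i
    have hvj := ZMod.val_lt j
    have h1 : (i = j + 1) ↔ (i.val = (j.val + 1) % n) := by
      rw [show (j.val + 1) % n = (j + 1).val by
        rw [ZMod.val_add, ZMod.val_one]]
      exact ⟨fun h => by rw [h], fun h => ZMod.val_injective n h⟩
    have h2 : (j = i + 1) ↔ (j.val = (i.val + 1) % n) := by
      rw [show (i.val + 1) % n = (i + 1).val by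
        rw [ZMod.val_add, ZMod.val_one]]
      exact ⟨fun h => by rw [h], fun h => ZMod.val_injective n h⟩
    rw [h1, h2, mod_succ_cases hvj, mod_succ_cases hvi]
    rcases lt_trichotomy i.val j.val with h | h | h
    · rw [claim i.val j.val h hvj]
      split <;> split <;> omega
    · rw [h]
      constructor
      · intro h'
        exact (G.loopless.irrefl _ h').elim
      · intro h'
        exfalso
        rcases h' with h' | h' <;> split at h' <;> omega
    · rw [G.adj_comm, claim j.val i.val h hvi]
      split <;> split <;> omega
end

section
/- Every self-centered chordal graph with at least two vertices is 2-connected. -/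
open SimpleGraph

variable {V : Type*}

lemma reach_of_walk_avoid {G : SimpleGraph V} {v a b : V}
    (p : G.Walk a b) (hv : v ∉ p.support) (ha : a ∈ ({v}ᶜ : Set V)) (hb : b ∈ ({v}ᶜ : Set V)) :
    (G.induce ({v}ᶜ : Set V)).Reachable ⟨a, ha⟩ ⟨b, hb⟩ := by
  induction p with
  | nil => rfl
  | @cons a c b h p ih =>
    rw [Walk.support_cons, List.mem_cons] at hv
    push_neg at hv
    have hc : c ∈ ({v}ᶜ : Set V) := fun hcv => hv.2 (hcv ▸ p.start_mem_support)
    have hadj : (G.induce ({v}ᶜ : Set V)).Adj ⟨a, ha⟩ ⟨c, hc⟩ := by simp [h]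
    exact hadj.reachable.trans (ih hv.2 hc hb)

theorem self_centered_no_cutvertex [Fintype V] (G : SimpleGraph V) (hG : G.Connected)
    (hch : KChordal G 3) (hnc : G ≠ ⊤) (hsc : ∀ x, ecc G x = grad G) :
    ∀ v : V, (G.induce ({v}ᶜ : Set V)).Connected := by
  have hne : Nonempty V := hG.nonempty
  -- r ≥ 2
  obtain ⟨u, w, huw⟩ : ∃ u w, u ≠ w ∧ ¬ G.Adj u w := by
    by_contra h
    push_neg at h
    apply hnc
    ext a b
    simp only [top_adj]
    exact ⟨Adj.ne, fun hab => h a b hab⟩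
  have hdist_le : ∀ y x : V, G.dist y x ≤ grad G := fun y x => by
    rw [← hsc y]; exact Finset.le_sup (Finset.mem_univ x)
  have hr2 : 2 ≤ grad G := by
    refine le_trans ?_ (hdist_le u w)
    have h0 : 0 < G.dist u w := hG.pos_dist_of_ne huw.1
    have h1 : G.dist u w ≠ 1 := fun h => huw.2 (dist_eq_one_iff_adj.mp h)
    omega
  intro v
  -- far vertex from v
  obtain ⟨x, _, hx⟩ := Finset.exists_mem_eq_sup (Finset.univ : Finset V)
    Finset.univ_nonempty (G.dist v)
  have hxd : G.dist v x = grad G := by rw [← hsc v, ecc, hx]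
  have hxv : x ≠ v := by
    intro h
    rw [h, SimpleGraph.dist_self] at hxd
    omega
  classical
  have key : ∀ (y : V) (hyv : y ≠ v), (G.induce ({v}ᶜ : Set V)).Reachable ⟨y, by simpa using hyv⟩ ⟨x, by simp; exact hxv⟩ := by
    intro y hyv
    by_contra hnr
    obtain ⟨p, hp⟩ := hG.exists_walk_length_eq_dist y x
    have hvmem : v ∈ p.support := by
      by_contra hvn
      exact hnr (reach_of_walk_avoid p hvn (by simp [hyv]) (by simp [hxv]))
    have hsplit := congr_arg Walk.length (p.take_spec hvmem)
    rw [Walk.length_append] at hsplit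
    have h1 : G.dist y v ≤ (p.takeUntil v hvmem).length := dist_le _
    have h2 : G.dist v x ≤ (p.dropUntil v hvmem).length := dist_le _
    have h3 : 1 ≤ G.dist y v := hG.pos_dist_of_ne hyv
    have h4 : G.dist y x ≤ grad G := hdist_le y x
    omega
  rw [connected_iff]
  refine ⟨?_, ⟨⟨x, by simp; exact hxv⟩⟩⟩
  rintro ⟨a, ha⟩ ⟨b, hb⟩
  have ha' : a ≠ v := by simpa using ha
  have hb' : b ≠ v := by simpa using hb
  exact (key a ha').trans (key b hb').symm
end

section
/- Let G be a connected chordal graph with Diam(G) ≤ 3 such that the induced subgraph on C(G) is self-centered with radius 2. Then G is the center of some chordal graph; specifically, adding a new pendant vertex wᵢ adjacent to each vertex aᵢ of eccentricity 2 yields a chordal graph G′ whose center is exactly V(G). -/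
open SimpleGraph

variable {V : Type*}

/-- `G` with a new pendant vertex attached to each vertex of eccentricity two. -/
def pendant [Fintype V] (G : SimpleGraph V) :
    SimpleGraph (V ⊕ {a : V // ecc G a = 2}) :=
  SimpleGraph.fromRel (fun x y => match x, y with
    | Sum.inl a, Sum.inl b => G.Adj a b
    | Sum.inl a, Sum.inr w => w.1 = a
    | _, _ => False)

section Aux

variable [Fintype V] {G : SimpleGraph V}

lemma dist_le_ecc (x y : V) : G.dist x y ≤ ecc G x :=
  Finset.le_sup (Finset.mem_univ y)

lemma ecc_le_gdiam (x : V) : ecc G x ≤ gdiam G :=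
  Finset.le_sup (Finset.mem_univ x)

lemma grad_le_ecc (x : V) : grad G ≤ ecc G x :=
  Nat.sInf_le ⟨x, rfl⟩

lemma exists_dist_ge {x : V} {n : ℕ} (hn : 0 < n) (h : n ≤ ecc G x) :
    ∃ y, n ≤ G.dist x y := by
  obtain ⟨y, -, hy⟩ := (Finset.le_sup_iff hn).mp h
  exact ⟨y, hy⟩

lemma pendant_adj_inl_inl {a b : V} :
    (pendant G).Adj (Sum.inl a) (Sum.inl b) ↔ G.Adj a b := by
  constructor
  · rintro ⟨-, h | h⟩
    · exact h
    · exact h.symm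
  · exact fun h => ⟨by simp [h.ne], Or.inl h⟩

lemma pendant_adj_inl_inr {a : V} {w : {a : V // ecc G a = 2}} :
    (pendant G).Adj (Sum.inl a) (Sum.inr w) ↔ w.1 = a := by
  constructor
  · rintro ⟨-, h | h⟩
    · exact h
    · exact h.elim
  · exact fun h => ⟨by simp, Or.inl h⟩

lemma pendant_adj_inr_inl {a : V} {w : {a : V // ecc G a = 2}} :
    (pendant G).Adj (Sum.inr w) (Sum.inl a) ↔ w.1 = a := by
  rw [adj_comm]; exact pendant_adj_inl_inr

lemma pendant_not_adj_inr_inr {w w' : {a : V // ecc G a = 2}} :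
    ¬ (pendant G).Adj (Sum.inr w) (Sum.inr w') := by
  rintro ⟨-, h | h⟩ <;> exact h

/-- The inclusion of `G` into `pendant G`. -/
def inlHom (G : SimpleGraph V) [Fintype V] : G →g pendant G :=
  ⟨Sum.inl, fun h => pendant_adj_inl_inl.mpr h⟩

@[simp] lemma inlHom_apply (a : V) : inlHom G a = Sum.inl a := rfl

lemma potential_le {W : Type*} {H : SimpleGraph W} (f : W → ℕ)
    (hf : ∀ x y, H.Adj x y → f x ≤ f y + 1) :
    ∀ {u v : W} (p : H.Walk u v), f u ≤ f v + p.length := by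
  intro u v p
  induction p with
  | nil => simp
  | cons h p ih =>
    have h1 := hf _ _ h
    simp only [SimpleGraph.Walk.length_cons]
    omega

lemma dist_ge_potential {W : Type*} {H : SimpleGraph W} (f : W → ℕ)
    (hf : ∀ x y, H.Adj x y → f x ≤ f y + 1) {u v : W} (hr : H.Reachable u v)
    (hv : f v = 0) : f u ≤ H.dist u v := by
  obtain ⟨p, hp⟩ := hr.exists_walk_length_eq_dist
  have := potential_le f hf p
  omega

lemma pdist_inl_inl (hG : G.Connected) (a b : V) :
    (pendant G).dist (Sum.inl a) (Sum.inl b) = G.dist a b := by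
  obtain ⟨p, hp⟩ := hG.exists_walk_length_eq_dist a b
  apply le_antisymm
  · have := SimpleGraph.dist_le (p.map (inlHom G))
    exact this.trans_eq (by rw [SimpleGraph.Walk.length_map, hp])
  · set f : V ⊕ {a : V // ecc G a = 2} → ℕ :=
      Sum.elim (fun x => G.dist x b) (fun w => G.dist w.1 b + 1) with hf
    have hlip : ∀ x y, (pendant G).Adj x y → f x ≤ f y + 1 := by
      rintro (x | w) (y | w') h
      · have hadj := pendant_adj_inl_inl.mp h
        have h1 : G.dist x b ≤ G.dist x y + G.dist y b := hG.dist_triangle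
        have h2 : G.dist x y = 1 := dist_eq_one_iff_adj.mpr hadj
        simp only [hf, Sum.elim_inl]
        omega
      · have hadj := pendant_adj_inl_inr.mp h
        subst hadj
        simp only [hf, Sum.elim_inl, Sum.elim_inr]
        omega
      · have hadj := pendant_adj_inr_inl.mp h
        subst hadj
        simp only [hf, Sum.elim_inl, Sum.elim_inr]
        omega
      · exact absurd h pendant_not_adj_inr_inr
    have hr : (pendant G).Reachable (Sum.inl a) (Sum.inl b) := ⟨p.map (inlHom G)⟩
    have := dist_ge_potential f hlip hr (by simp [hf])
    simpa [hf] using this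

lemma pdist_inl_inr (hG : G.Connected) (a : V) (w : {a : V // ecc G a = 2}) :
    (pendant G).dist (Sum.inl a) (Sum.inr w) = G.dist a w.1 + 1 := by
  classical
  obtain ⟨p, hp⟩ := hG.exists_walk_length_eq_dist a w.1
  have hadj : (pendant G).Adj (Sum.inl w.1) (Sum.inr w) := pendant_adj_inl_inr.mpr rfl
  have hwalk : (pendant G).Walk (Sum.inl a) (Sum.inr w) := (p.map (inlHom G)).concat hadj
  apply le_antisymm
  · have := SimpleGraph.dist_le ((p.map (inlHom G)).concat hadj)
    exact this.trans_eq ((SimpleGraph.Walk.length_concat _ _).trans (congrArg (· + 1) ((SimpleGraph.Walk.length_map _ _).trans hp)))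
  · set f : V ⊕ {a : V // ecc G a = 2} → ℕ :=
      Sum.elim (fun x => G.dist x w.1 + 1)
        (fun w' => if w' = w then 0 else G.dist w'.1 w.1 + 2) with hf
    have hlip : ∀ x y, (pendant G).Adj x y → f x ≤ f y + 1 := by
      rintro (x | u) (y | u') h
      · have hadj' := pendant_adj_inl_inl.mp h
        have h1 : G.dist x w.1 ≤ G.dist x y + G.dist y w.1 := hG.dist_triangle
        have h2 : G.dist x y = 1 := dist_eq_one_iff_adj.mpr hadj'
        simp only [hf, Sum.elim_inl]
        omega
      · have hadj' := pendant_adj_inl_inr.mp h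
        subst hadj'
        by_cases hu : u' = w
        · subst hu
          simp [hf, SimpleGraph.dist_self]
        · simp only [hf, Sum.elim_inl, Sum.elim_inr, if_neg hu]
          omega
      · have hadj' := pendant_adj_inr_inl.mp h
        subst hadj'
        by_cases hu : u = w
        · subst hu
          simp [hf]
        · simp only [hf, Sum.elim_inl, Sum.elim_inr, if_neg hu]
          omega
      · exact absurd h pendant_not_adj_inr_inr
    have hr : (pendant G).Reachable (Sum.inl a) (Sum.inr w) := ⟨hwalk⟩
    have := dist_ge_potential f hlip hr (by simp [hf])
    simpa [hf] using this

lemma pdist_inr_inr_ge (hG : G.Connected) (w w' : {a : V // ecc G a = 2})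
    (hne : w ≠ w') :
    G.dist w.1 w'.1 + 2 ≤ (pendant G).dist (Sum.inr w) (Sum.inr w') := by
  classical
  obtain ⟨p, hp⟩ := hG.exists_walk_length_eq_dist w.1 w'.1
  have hadj1 : (pendant G).Adj (Sum.inr w) (Sum.inl w.1) := pendant_adj_inr_inl.mpr rfl
  have hadj2 : (pendant G).Adj (Sum.inl w'.1) (Sum.inr w') := pendant_adj_inl_inr.mpr rfl
  have hwalk : (pendant G).Walk (Sum.inr w) (Sum.inr w') :=
    SimpleGraph.Walk.cons hadj1 ((p.map (inlHom G)).concat hadj2)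
  set f : V ⊕ {a : V // ecc G a = 2} → ℕ :=
    Sum.elim (fun x => G.dist x w'.1 + 1)
      (fun u => if u = w' then 0 else G.dist u.1 w'.1 + 2) with hf
  have hlip : ∀ x y, (pendant G).Adj x y → f x ≤ f y + 1 := by
    rintro (x | u) (y | u') h
    · have hadj' := pendant_adj_inl_inl.mp h
      have h1 : G.dist x w'.1 ≤ G.dist x y + G.dist y w'.1 := hG.dist_triangle
      have h2 : G.dist x y = 1 := dist_eq_one_iff_adj.mpr hadj'
      simp only [hf, Sum.elim_inl]
      omega
    · have hadj' := pendant_adj_inl_inr.mp h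
      subst hadj'
      by_cases hu : u' = w'
      · subst hu
        simp [hf, SimpleGraph.dist_self]
      · simp only [hf, Sum.elim_inl, Sum.elim_inr, if_neg hu]
        omega
    · have hadj' := pendant_adj_inr_inl.mp h
      subst hadj'
      by_cases hu : u = w'
      · subst hu
        simp [hf]
      · simp only [hf, Sum.elim_inl, Sum.elim_inr, if_neg hu]
        omega
    · exact absurd h pendant_not_adj_inr_inr
  have hr : (pendant G).Reachable (Sum.inr w) (Sum.inr w') := ⟨hwalk⟩
  have := dist_ge_potential f hlip hr (by simp [hf])
  simpa [hf, hne] using this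

/-- The inclusion of an induced subgraph into `G`. -/
def downHom (G : SimpleGraph V) (s : Set V) : G.induce s →g G :=
  ⟨Subtype.val, fun h => h⟩

end Aux

theorem pendant_center [Fintype V] (G : SimpleGraph V) (hG : G.Connected)
    (hch : KChordal G 3) (hd : gdiam G ≤ 3)
    (hsc : ∀ x : ↥(_root_.center G), ecc (G.induce (_root_.center G)) x = 2) :
    KChordal (pendant G) 3 ∧ _root_.center (pendant G) = Set.range Sum.inl := by
  have hV : Nonempty V := hG.nonempty
  have hd3 : ∀ x : V, ecc G x ≤ 3 := fun x => (ecc_le_gdiam x).trans hd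
  -- a center vertex exists
  obtain ⟨c, hc⟩ : ∃ c : V, ecc G c = grad G := by
    have : grad G ∈ Set.range (ecc G) :=
      Nat.sInf_mem (Set.range_nonempty _)
    obtain ⟨c, hc⟩ := this
    exact ⟨c, hc⟩
  -- the radius is 2
  have hgrad : grad G = 2 := by
    have hub : grad G ≤ 3 := (grad_le_ecc c).trans (hd3 c)
    -- lower bound: grad G ≥ 2
    have hlb : 2 ≤ grad G := by
      have h2 := hsc ⟨c, hc⟩
      obtain ⟨b, hb⟩ : ∃ b : ↥(_root_.center G), 2 ≤ (G.induce (_root_.center G)).dist ⟨c, hc⟩ b := by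
        have : (2 : ℕ) ≤ ecc (G.induce (_root_.center G)) ⟨c, hc⟩ := h2.ge
        exact exists_dist_ge (by norm_num) this
      have hne : c ≠ b.1 := by
        intro hceq
        have heq : (⟨c, hc⟩ : ↥(_root_.center G)) = b := Subtype.ext hceq
        rw [heq, SimpleGraph.dist_self] at hb
        omega
      have hnadj : ¬ G.Adj c b.1 := by
        intro hadj
        have hadj' : (G.induce (_root_.center G)).Adj ⟨c, hc⟩ b := hadj
        have := SimpleGraph.dist_le (SimpleGraph.Walk.cons hadj' SimpleGraph.Walk.nil)
        simp at this
        omega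
      have h1 : 0 < G.dist c b.1 := hG.pos_dist_of_ne hne
      have h2' : G.dist c b.1 ≠ 1 := fun h => hnadj (dist_eq_one_iff_adj.mp h)
      have : 2 ≤ G.dist c b.1 := by omega
      calc 2 ≤ G.dist c b.1 := this
        _ ≤ ecc G c := dist_le_ecc c b.1
        _ = grad G := hc
    -- rule out grad G = 3
    by_contra hne2
    have h3 : grad G = 3 := by omega
    have hall : ∀ x : V, x ∈ _root_.center G := by
      intro x
      have h1 : grad G ≤ ecc G x := grad_le_ecc x
      have h2 : ecc G x ≤ 3 := hd3 x
      show ecc G x = grad G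
      omega
    let upHom : G →g G.induce (_root_.center G) := ⟨fun x => ⟨x, hall x⟩, fun h => h⟩
    -- c has a vertex at distance ≥ 3
    obtain ⟨b, hb⟩ : ∃ b, 3 ≤ G.dist c b := by
      refine exists_dist_ge (by norm_num) ?_
      rw [hc, h3]
    obtain ⟨q, hq⟩ := hG.exists_walk_length_eq_dist c b
    have hr : (G.induce (_root_.center G)).Reachable ⟨c, hall c⟩ ⟨b, hall b⟩ :=
      ⟨(q.map upHom).copy (by rfl) (by rfl)⟩
    obtain ⟨r, hrlen⟩ := hr.exists_walk_length_eq_dist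
    have hdown : G.dist c b ≤ (G.induce (_root_.center G)).dist ⟨c, hall c⟩ ⟨b, hall b⟩ := by
      have := SimpleGraph.dist_le (r.map (downHom G (_root_.center G)))
      exact this.trans_eq (by rw [SimpleGraph.Walk.length_map, hrlen])
    have hle2 : (G.induce (_root_.center G)).dist ⟨c, hall c⟩ ⟨b, hall b⟩ ≤ 2 := by
      have := dist_le_ecc (G := G.induce (_root_.center G)) ⟨c, hall c⟩ ⟨b, hall b⟩
      rw [hsc ⟨c, hall c⟩] at this
      exact this
    omega
  -- every eccentricity-2 vertex has an eccentricity-2 vertex at distance exactly 2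
  have hkey : ∀ a : V, ecc G a = 2 → ∃ b : V, ecc G b = 2 ∧ G.dist a b = 2 := by
    intro a ha
    have hamem : a ∈ _root_.center G := by
      show ecc G a = grad G
      rw [ha, hgrad]
    have h2 := hsc ⟨a, hamem⟩
    obtain ⟨b, hb⟩ : ∃ b : ↥(_root_.center G), 2 ≤ (G.induce (_root_.center G)).dist ⟨a, hamem⟩ b :=
      exists_dist_ge (by norm_num) h2.ge
    have hbecc : ecc G b.1 = 2 := by
      have hmem : ecc G b.1 = grad G := b.2
      rw [hgrad] at hmem
      exact hmem
    refine ⟨b.1, hbecc, ?_⟩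
    have hne : a ≠ b.1 := by
      intro haeq
      have heq : (⟨a, hamem⟩ : ↥(_root_.center G)) = b := Subtype.ext haeq
      rw [heq, SimpleGraph.dist_self] at hb
      omega
    have hnadj : ¬ G.Adj a b.1 := by
      intro hadj
      have hadj' : (G.induce (_root_.center G)).Adj ⟨a, hamem⟩ b := hadj
      have := SimpleGraph.dist_le (SimpleGraph.Walk.cons hadj' SimpleGraph.Walk.nil)
      simp at this
      omega
    have h1 : 0 < G.dist a b.1 := hG.pos_dist_of_ne hne
    have h2' : G.dist a b.1 ≠ 1 := fun h => hnadj (dist_eq_one_iff_adj.mp h)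
    have h3 : G.dist a b.1 ≤ 2 := by
      have hle := dist_le_ecc (G := G) a b.1
      rw [ha] at hle
      exact hle
    omega
  -- eccentricity of original vertices in the pendant graph is 3
  have heccinl : ∀ v : V, ecc (pendant G) (Sum.inl v) = 3 := by
    intro v
    apply le_antisymm
    · apply Finset.sup_le
      rintro (b | w) -
      · rw [pdist_inl_inl hG]
        exact (dist_le_ecc (G := G) v b).trans (hd3 v)
      · rw [pdist_inl_inr hG]
        have : G.dist v w.1 ≤ 2 := by
          rw [SimpleGraph.dist_comm]
          have := dist_le_ecc (G := G) w.1 v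
          rw [w.2] at this
          exact this
        omega
    · by_cases h2 : ecc G v = 2
      · obtain ⟨b, hbecc, hbd⟩ := hkey v h2
        have : (pendant G).dist (Sum.inl v) (Sum.inr ⟨b, hbecc⟩) = 3 := by
          rw [pdist_inl_inr hG, hbd]
        calc (3 : ℕ) = (pendant G).dist (Sum.inl v) (Sum.inr ⟨b, hbecc⟩) := this.symm
          _ ≤ ecc (pendant G) (Sum.inl v) := dist_le_ecc _ _
      · have hlow : 2 ≤ ecc G v := by
          have := grad_le_ecc (G := G) v
          rw [hgrad] at this
          exact this
        have h3 : 3 ≤ ecc G v := by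
          rcases Nat.lt_or_ge (ecc G v) 3 with h | h
          · omega
          · exact h
        obtain ⟨b, hb⟩ := exists_dist_ge (by norm_num) h3
        calc (3 : ℕ) ≤ G.dist v b := hb
          _ = (pendant G).dist (Sum.inl v) (Sum.inl b) := (pdist_inl_inl hG v b).symm
          _ ≤ ecc (pendant G) (Sum.inl v) := dist_le_ecc _ _
  -- eccentricity of pendant vertices is at least 4
  have heccinr : ∀ w : {a : V // ecc G a = 2}, 4 ≤ ecc (pendant G) (Sum.inr w) := by
    intro w
    obtain ⟨b, hbecc, hbd⟩ := hkey w.1 w.2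
    have hne : w ≠ ⟨b, hbecc⟩ := by
      intro h
      rw [h] at hbd
      simp [SimpleGraph.dist_self] at hbd
    calc (4 : ℕ) = G.dist w.1 b + 2 := by omega
      _ ≤ (pendant G).dist (Sum.inr w) (Sum.inr ⟨b, hbecc⟩) := pdist_inr_inr_ge hG w _ hne
      _ ≤ ecc (pendant G) (Sum.inr w) := dist_le_ecc _ _
  -- radius of the pendant graph is 3
  have hgrad' : grad (pendant G) = 3 := by
    apply le_antisymm
    · exact (grad_le_ecc (Sum.inl hV.some)).trans_eq (heccinl hV.some)
    · apply le_csInf (Set.range_nonempty _)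
      rintro x ⟨(v | w), rfl⟩
      · exact (heccinl v).ge
      · exact le_trans (by norm_num) (heccinr w)
  constructor
  · -- chordality
    intro n hn h
    obtain ⟨hn3, f, hinj, hadj⟩ := h
    have hz2 : ((2 : ℕ) : ZMod n) ≠ 0 := by
      intro h0
      rw [ZMod.natCast_eq_zero_iff] at h0
      have := Nat.le_of_dvd (by norm_num) h0
      omega
    have hinl : ∀ i : ZMod n, ∃ a : V, f i = Sum.inl a := by
      intro i
      rcases hfi : f i with a | w
      · exact ⟨a, rfl⟩
      · exfalso
        have h1 : (pendant G).Adj (f (i + 1)) (f i) := (hadj (i + 1) i).mpr (Or.inl rfl)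
        have h2 : (pendant G).Adj (f (i - 1)) (f i) := by
          refine (hadj (i - 1) i).mpr (Or.inr ?_)
          ring
        have key : ∀ x, (pendant G).Adj x (f i) → x = Sum.inl w.1 := by
          rw [hfi]
          rintro (a | w') hx
          · rw [pendant_adj_inl_inr.mp hx]
          · exact absurd hx pendant_not_adj_inr_inr
        have heq : f (i + 1) = f (i - 1) := by rw [key _ h1, key _ h2]
        have := hinj heq
        apply hz2
        have : (i + 1) - (i - 1) = 0 := by rw [this]; ring
        calc ((2 : ℕ) : ZMod n) = (i + 1) - (i - 1) := by push_cast; ring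
          _ = 0 := this
    choose g hg using hinl
    apply hch n hn
    refine ⟨hn3, g, ?_, ?_⟩
    · intro i j hij
      apply hinj
      rw [hg i, hg j, hij]
    · intro i j
      rw [← pendant_adj_inl_inl (G := G), ← hg i, ← hg j]
      exact hadj i j
  · -- the center is the original vertex set
    ext x
    rcases x with v | w
    · constructor
      · intro _
        exact ⟨v, rfl⟩
      · intro _
        show ecc (pendant G) (Sum.inl v) = grad (pendant G)
        rw [heccinl, hgrad']
    · constructor
      · intro h
        have h4 := heccinr w
        have h5 : ecc (pendant G) (Sum.inr w) = grad (pendant G) := h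
        rw [hgrad'] at h5
        omega
      · rintro ⟨y, hy⟩
        exact absurd hy (by simp)
end
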